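/- arXiv:1203.0861 — 3 statements merged into one kernel-verified Lean document; each statement's English description precedes it below -/
import Mathlib

section
/- For each divisor d_i of d with d_i > 1, the number of distinct lines L(ν, μ) through the origin in Z(d) × Z(d) having exactly d_i points equals ψ(d_i) = d_i ∏_{p | d_i} (1 + 1/p). In particular, there are exactly ψ(d) maximal lines through the origin. -/
open Finset

/-- The line through the origin in `Z(d) × Z(d)` generated by `(ν, μ)`. -/
def line (d : ℕ) (ν μ : ZMod d) : Set (ZMod d × ZMod d) :=
  {p | ∃ α : ZMod d, p = (ν * α, μ * α)}

section Aux

variable {d : ℕ}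

lemma line_eq_zmultiples [NeZero d] (x : ZMod d × ZMod d) :
    line d x.1 x.2 = (AddSubgroup.zmultiples x : Set (ZMod d × ZMod d)) := by
  ext p
  simp only [line, Set.mem_setOf_eq, SetLike.mem_coe, AddSubgroup.mem_zmultiples_iff]
  constructor
  · rintro ⟨α, rfl⟩
    refine ⟨(α.val : ℤ), ?_⟩
    rw [← Int.cast_smul_eq_zsmul (ZMod d)]
    push_cast
    rw [ZMod.natCast_val, ZMod.cast_id]
    ext
    · simp [mul_comm]
    · simp [mul_comm]
  · rintro ⟨k, rfl⟩
    refine ⟨((k : ZMod d)), ?_⟩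
    rw [← Int.cast_smul_eq_zsmul (ZMod d)]
    ext
    · simp [mul_comm]
    · simp [mul_comm]

lemma ncard_line [NeZero d] (x : ZMod d × ZMod d) :
    (line d x.1 x.2).ncard = addOrderOf x := by
  rw [line_eq_zmultiples, ← Nat.card_zmultiples x, ← Nat.card_coe_set_eq]
  rfl

lemma card_torsion_zmod [NeZero d] {m : ℕ} (hm : m ∣ d) :
    (univ.filter (fun a : ZMod d => m • a = 0)).card = m := by
  classical
  have hm0 : m ≠ 0 := by
    rintro rfl
    exact (NeZero.ne d) (Nat.eq_zero_of_zero_dvd hm)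
  rw [Finset.card_eq_sum_card_fiberwise
      (f := fun a : ZMod d => addOrderOf a) (t := m.divisors)
      (fun a ha => Nat.mem_divisors.mpr
        ⟨addOrderOf_dvd_iff_nsmul_eq_zero.mpr (Finset.mem_filter.mp ha).2, hm0⟩)]
  have key : ∀ e ∈ m.divisors,
      ((univ.filter (fun a : ZMod d => m • a = 0)).filter
        (fun a => addOrderOf a = e)).card = Nat.totient e := by
    intro e he
    have hed : e ∣ m := (Nat.mem_divisors.mp he).1
    have : ((univ.filter (fun a : ZMod d => m • a = 0)).filter
        (fun a => addOrderOf a = e)) = univ.filter (fun a : ZMod d => addOrderOf a = e) := by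
      ext a
      simp only [Finset.mem_filter, Finset.mem_univ, true_and, and_iff_right_iff_imp]
      intro ha
      exact addOrderOf_dvd_iff_nsmul_eq_zero.mp (ha ▸ hed)
    rw [this]
    have hcard : e ∣ Fintype.card (ZMod d) := by
      rw [ZMod.card]
      exact hed.trans hm
    simpa using IsAddCyclic.card_addOrderOf_eq_totient (α := ZMod d) hcard
  rw [Finset.sum_congr rfl key, Nat.sum_totient]

lemma card_torsion_prod [NeZero d] {m : ℕ} (hm : m ∣ d) :
    (univ.filter (fun x : ZMod d × ZMod d => m • x = 0)).card = m * m := by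
  classical
  have : (univ.filter (fun x : ZMod d × ZMod d => m • x = 0)) =
      (univ.filter (fun a : ZMod d => m • a = 0)) ×ˢ
        (univ.filter (fun a : ZMod d => m • a = 0)) := by
    ext x
    simp [Finset.mem_product, Prod.ext_iff]
  rw [this, Finset.card_product, card_torsion_zmod hm]

end Aux

section Cyclic

variable {G : Type*} [AddCommGroup G]

lemma isAddCyclic_zmultiples (g : G) : IsAddCyclic ↥(AddSubgroup.zmultiples g) := by
  refine ⟨⟨g, AddSubgroup.mem_zmultiples g⟩, ?_⟩
  rintro ⟨x, k, hk⟩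
  exact ⟨k, Subtype.ext (by simpa using hk)⟩

lemma card_addOrderOf_eq_in_zmultiples [Fintype G] [DecidableEq G] (g : G) {n : ℕ}
    (hg : addOrderOf g = n) :
    (univ.filter (fun x : G => x ∈ AddSubgroup.zmultiples g ∧ addOrderOf x = n)).card
      = Nat.totient n := by
  classical
  haveI : IsAddCyclic ↥(AddSubgroup.zmultiples g) := isAddCyclic_zmultiples g
  have hcard : Fintype.card ↥(AddSubgroup.zmultiples g) = n := by
    rw [← Nat.card_eq_fintype_card, Nat.card_zmultiples, hg]
  have htot := IsAddCyclic.card_addOrderOf_eq_totient (α := ↥(AddSubgroup.zmultiples g))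
    (d := n) (by rw [hcard])
  rw [← htot]
  refine Finset.card_bij' (fun x hx => ⟨x, (Finset.mem_filter.mp hx).2.1⟩)
    (fun a _ => (a : G)) ?_ ?_ ?_ ?_
  · intro x hx
    simp only [Finset.mem_filter, Finset.mem_univ, true_and] at hx ⊢
    rw [AddSubgroup.addOrderOf_mk]
    exact hx.2
  · intro a ha
    simp only [Finset.mem_filter, Finset.mem_univ, true_and] at ha ⊢
    exact ⟨a.2, by rw [AddSubgroup.addOrderOf_coe]; exact ha⟩
  · intro x hx; rfl
  · intro a ha; rfl

end Cyclic

section Psi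
open ArithmeticFunction

/-- The function `n ↦ φ(n) · n · ∏_{p ∣ n} (1 + 1/p)` as a `ℚ`-valued arithmetic function. -/
noncomputable def psiPhi : ArithmeticFunction ℚ :=
  ⟨fun n => if n = 0 then 0 else
    (Nat.totient n : ℚ) * n * ∏ p ∈ n.primeFactors, (1 + 1 / (p : ℚ)), by simp⟩

lemma psiPhi_apply {n : ℕ} (hn : n ≠ 0) :
    psiPhi n = (Nat.totient n : ℚ) * n * ∏ p ∈ n.primeFactors, (1 + 1 / (p : ℚ)) := by
  simp [psiPhi, hn]

lemma psiPhi_mult : psiPhi.IsMultiplicative := by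
  constructor
  · simp [psiPhi]
  · intro m n hmn
    rcases eq_or_ne m 0 with rfl | hm
    · have : n = 1 := by simpa [Nat.coprime_zero_left] using hmn
      subst this; simp [psiPhi]
    rcases eq_or_ne n 0 with rfl | hn
    · have : m = 1 := by simpa [Nat.coprime_zero_right] using hmn
      subst this; simp [psiPhi]
    rw [psiPhi_apply (Nat.mul_ne_zero hm hn), psiPhi_apply hm, psiPhi_apply hn,
      Nat.totient_mul hmn, Nat.Coprime.primeFactors_mul hmn,
      Finset.prod_union (Nat.Coprime.disjoint_primeFactors hmn)]
    push_cast
    ring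

/-- The Dirichlet convolution `μ * (·)²` as a `ℚ`-valued arithmetic function. -/
noncomputable def muPow : ArithmeticFunction ℚ :=
  ((ArithmeticFunction.moebius : ArithmeticFunction ℤ) : ArithmeticFunction ℚ) *
    ((ArithmeticFunction.pow 2 : ArithmeticFunction ℕ) : ArithmeticFunction ℚ)

lemma muPow_mult : muPow.IsMultiplicative :=
  (isMultiplicative_moebius.intCast).mul (isMultiplicative_pow.natCast)

lemma muPow_apply (n : ℕ) :
    muPow n = ∑ x ∈ n.divisorsAntidiagonal, (moebius x.1 : ℚ) * (x.2 : ℚ) ^ 2 := by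
  rw [muPow, mul_apply]
  refine Finset.sum_congr rfl fun x hx => ?_
  have hx2 : x.2 ≠ 0 := by
    have := Nat.snd_mem_divisors_of_mem_antidiagonal hx
    exact (Nat.pos_of_mem_divisors this).ne'
  simp [pow_apply, hx2]

lemma muPow_eq_psiPhi : muPow = psiPhi := by
  rw [ArithmeticFunction.IsMultiplicative.eq_iff_eq_on_prime_powers _ muPow_mult _ psiPhi_mult]
  intro p i hp
  rcases Nat.eq_zero_or_pos i with rfl | hi
  · simp only [pow_zero]
    rw [muPow_mult.map_one, psiPhi_mult.map_one]
  obtain ⟨j, rfl⟩ : ∃ j, i = j + 1 := ⟨i - 1, by omega⟩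
  have hp0 : (p : ℚ) ≠ 0 := Nat.cast_ne_zero.mpr hp.pos.ne'
  have hp1 : (1 : ℕ) ≤ p := hp.one_le
  rw [muPow_apply, Nat.sum_divisorsAntidiagonal (f := fun a b => (moebius a : ℚ) * (b : ℚ) ^ 2),
    Nat.sum_divisors_prime_pow hp]
  have hdiv : ∀ k ∈ Finset.range (j + 2),
      (p ^ (j + 1) / p ^ k : ℕ) = p ^ (j + 1 - k) := by
    intro k hk
    have hk' := Finset.mem_range.mp hk
    rw [Nat.pow_div (by omega) hp.pos]
  rw [Finset.sum_congr rfl fun k hk => by rw [hdiv k hk]]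
  rw [Finset.sum_range_succ', Finset.sum_range_succ']
  have hzero : ∀ k ∈ Finset.range j,
      (moebius (p ^ (k + 1 + 1)) : ℚ) * ((p ^ (j + 1 - (k + 1 + 1)) : ℕ) : ℚ) ^ 2 = 0 := by
    intro k hk
    rw [ArithmeticFunction.moebius_apply_prime_pow hp (by omega)]
    simp
  rw [Finset.sum_congr rfl hzero, Finset.sum_const_zero]
  rw [ArithmeticFunction.moebius_apply_prime_pow hp (by omega) (k := 0 + 1)]
  simp only [if_pos trivial, pow_zero, Nat.sub_zero]
  rw [show moebius 1 = 1 from moebius_apply_one]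
  rw [psiPhi_apply (pow_ne_zero _ hp.pos.ne'), Nat.totient_prime_pow hp (by omega),
    Nat.primeFactors_prime_pow (by omega) hp, Finset.prod_singleton]
  have h1 : j + 1 - 1 = j := by omega
  rw [h1]
  push_cast [Nat.cast_sub hp1]
  field_simp
  ring

end Psi

/-- For each divisor `dᵢ` of `d` with `dᵢ > 1`, the number of distinct lines through the
origin in `Z(d) × Z(d)` with exactly `dᵢ` points equals the Dedekind psi function
`ψ(dᵢ) = dᵢ ∏_{p ∣ dᵢ} (1 + 1/p)`.  (In particular, taking `dᵢ = d`, there are exactly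
`ψ(d)` maximal lines through the origin.) -/
theorem card_lines_with_given_size (d di : ℕ) (hd : 0 < d) (hdvd : di ∣ d)
    (hone : 1 < di) :
    ((Set.ncard {L : Set (ZMod d × ZMod d) |
        (∃ ν μ : ZMod d, L = line d ν μ) ∧ L.ncard = di} : ℕ) : ℚ)
      = (di : ℚ) * ∏ p ∈ di.primeFactors, (1 + 1 / (p : ℚ)) := by
  classical
  haveI : NeZero d := ⟨hd.ne'⟩
  have hdi0 : di ≠ 0 := by omega
  -- the count of elements of a given additive order
  let N : ℕ → ℕ := fun e =>
    (univ.filter (fun x : ZMod d × ZMod d => addOrderOf x = e)).card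
  -- summing over divisors gives the torsion count
  have hsum : ∀ n > 0, n ∈ {n : ℕ | n ∣ d} → (∑ e ∈ n.divisors, (N e : ℚ)) = (n : ℚ) ^ 2 := by
    intro n hn hnd
    have htor := card_torsion_prod (d := d) hnd
    have hfib : (univ.filter (fun x : ZMod d × ZMod d => n • x = 0)).card
        = ∑ e ∈ n.divisors, N e := by
      rw [Finset.card_eq_sum_card_fiberwise (f := fun x => addOrderOf x) (t := n.divisors)
        (fun x hx => Nat.mem_divisors.mpr
          ⟨addOrderOf_dvd_iff_nsmul_eq_zero.mpr (Finset.mem_filter.mp hx).2, hn.ne'⟩)]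
      refine Finset.sum_congr rfl fun e he => ?_
      congr 1
      ext x
      simp only [Finset.mem_filter, Finset.mem_univ, true_and, and_iff_right_iff_imp]
      intro hx
      exact addOrderOf_dvd_iff_nsmul_eq_zero.mp (hx ▸ (Nat.mem_divisors.mp he).1)
    have hnat : (∑ e ∈ n.divisors, N e) = n * n := by rw [← hfib, htor]
    have := congrArg (fun k : ℕ => (k : ℚ)) hnat
    push_cast at this
    rw [this]
    ring
  -- Möbius inversion
  have hmob := (ArithmeticFunction.sum_eq_iff_sum_mul_moebius_eq_on (R := ℚ)
      (f := fun e => (N e : ℚ)) (g := fun n => (n : ℚ) ^ 2) {n : ℕ | n ∣ d}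
      (fun m n hmn hn => hmn.trans hn)).mp hsum di (by omega) hdvd
  have hNdi : (N di : ℚ) = psiPhi di := by
    rw [← hmob, ← muPow_eq_psiPhi, muPow_apply]
  -- the set of lines of size `di` as a finite image
  let I : Finset (Set (ZMod d × ZMod d)) :=
    (univ.filter (fun x : ZMod d × ZMod d => addOrderOf x = di)).image
      (fun x => line d x.1 x.2)
  have hset : {L : Set (ZMod d × ZMod d) | (∃ ν μ : ZMod d, L = line d ν μ) ∧ L.ncard = di}
      = ↑I := by
    ext A
    simp only [I, Set.mem_setOf_eq, Finset.coe_image, Set.mem_image, Finset.mem_coe,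
      Finset.mem_filter, Finset.mem_univ, true_and]
    constructor
    · rintro ⟨⟨ν, μ, rfl⟩, hc⟩
      refine ⟨(ν, μ), ?_, rfl⟩
      rw [← ncard_line]
      exact hc
    · rintro ⟨x, hx, rfl⟩
      exact ⟨⟨x.1, x.2, rfl⟩, by rw [ncard_line]; exact hx⟩
  -- fiber count: each line of size `di` has `φ(di)` generators
  have hfib2 : N di = I.card * Nat.totient di := by
    rw [show N di = (univ.filter (fun x : ZMod d × ZMod d => addOrderOf x = di)).card from rfl]
    rw [Finset.card_eq_sum_card_fiberwise (f := fun x => line d x.1 x.2) (t := I)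
        (fun x hx => Finset.mem_image_of_mem _ hx)]
    have key : ∀ A ∈ I,
        ((univ.filter (fun x : ZMod d × ZMod d => addOrderOf x = di)).filter
          (fun x => line d x.1 x.2 = A)).card = Nat.totient di := by
      intro A hA
      obtain ⟨g, hg, rfl⟩ := Finset.mem_image.mp hA
      have hgord : addOrderOf g = di := (Finset.mem_filter.mp hg).2
      have heq : ((univ.filter (fun x : ZMod d × ZMod d => addOrderOf x = di)).filter
            (fun x => line d x.1 x.2 = line d g.1 g.2))
          = univ.filter (fun x : ZMod d × ZMod d =>
              x ∈ AddSubgroup.zmultiples g ∧ addOrderOf x = di) := by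
        ext x
        simp only [Finset.mem_filter, Finset.mem_univ, true_and]
        constructor
        · rintro ⟨hxo, hline⟩
          refine ⟨?_, hxo⟩
          have hx : x ∈ line d x.1 x.2 := ⟨1, by simp⟩
          rw [hline, line_eq_zmultiples] at hx
          exact hx
        · rintro ⟨hmem, hxo⟩
          refine ⟨hxo, ?_⟩
          have hsub : line d x.1 x.2 ⊆ line d g.1 g.2 := by
            rw [line_eq_zmultiples, line_eq_zmultiples]
            exact AddSubgroup.zmultiples_le.mpr hmem
          exact Set.eq_of_subset_of_ncard_le hsub
            (by rw [ncard_line, ncard_line, hxo, hgord]) (Set.toFinite _)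
      rw [heq, card_addOrderOf_eq_in_zmultiples g hgord]
    rw [Finset.sum_congr rfl key, Finset.sum_const, smul_eq_mul]
  -- put everything together
  rw [hset, Set.ncard_coe_finset]
  have hphi : (Nat.totient di : ℚ) ≠ 0 :=
    Nat.cast_ne_zero.mpr (Nat.totient_pos.mpr (by omega)).ne'
  have hkey : (I.card : ℚ) * (Nat.totient di : ℚ)
      = ((di : ℚ) * ∏ p ∈ di.primeFactors, (1 + 1 / (p : ℚ))) * (Nat.totient di : ℚ) := by
    have h1 := hNdi
    rw [psiPhi_apply hdi0] at h1
    have h2 := congrArg (fun k : ℕ => (k : ℚ)) hfib2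
    push_cast at h2
    rw [h2] at h1
    rw [h1]
    ring
  exact mul_right_cancel₀ hphi hkey
end

section
/- Let d = d_1 d_2 with d_1, d_2 distinct primes. Among the ψ(d)(ψ(d)-1)/2 unordered pairs of distinct maximal lines through the origin in Z(d)×Z(d), exactly d_1·ψ(d)/2 pairs intersect in d_2 points, exactly d_2·ψ(d)/2 pairs intersect in d_1 points, and exactly d·ψ(d)/2 pairs intersect only at the origin. -/
/-- The set of maximal lines through the origin in `Z(d) × Z(d)` (lines with exactly
`d` points). -/
def maximalLines (d : ℕ) : Set (Set (ZMod d × ZMod d)) :=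
  {L | (∃ ν μ : ZMod d, L = line d ν μ) ∧ L.ncard = d}

/-- The set of unordered pairs `{L, L'}` of distinct maximal lines through the origin
whose intersection satisfies the predicate `P`. -/
def linePairs (d : ℕ) (P : Set (ZMod d × ZMod d) → Prop) :
    Set (Set (Set (ZMod d × ZMod d))) :=
  {s | ∃ L L', L ≠ L' ∧ s = {L, L'} ∧ L ∈ maximalLines d ∧ L' ∈ maximalLines d ∧
        P (L ∩ L')}

section LineBasics

lemma zero_mem_line (d : ℕ) (ν μ : ZMod d) : ((0 : ZMod d), (0 : ZMod d)) ∈ line d ν μ :=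
  ⟨0, by simp⟩

lemma line_zero (d : ℕ) : line d 0 0 = {((0 : ZMod d), (0 : ZMod d))} := by
  ext x; simp [line]

lemma line_smul (d : ℕ) (u : (ZMod d)ˣ) (ν μ : ZMod d) :
    line d (↑u * ν) (↑u * μ) = line d ν μ := by
  have h : (↑u * ↑u⁻¹ : ZMod d) = 1 := u.mul_inv
  have h' : (↑u⁻¹ * ↑u : ZMod d) = 1 := u.inv_mul
  ext x
  constructor
  · rintro ⟨α, rfl⟩
    refine ⟨(↑u : ZMod d) * α, ?_⟩
    have e : ∀ c : ZMod d, ↑u * c * α = c * (↑u * α) := fun c => by ring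
    simp [e]
  · rintro ⟨α, rfl⟩
    refine ⟨(↑u⁻¹ : ZMod d) * α, ?_⟩
    have e : ∀ c : ZMod d, c * α = ↑u * c * (↑u⁻¹ * α) := fun c => by
      calc c * α = (↑u * ↑u⁻¹) * (c * α) := by rw [h, one_mul]
      _ = ↑u * c * (↑u⁻¹ * α) := by ring
    exact Prod.ext (e ν) (e μ)

lemma ncard_prod' {α β : Type*} (s : Set α) (t : Set β) :
    (s ×ˢ t).ncard = s.ncard * t.ncard := by
  rw [← Nat.card_coe_set_eq, ← Nat.card_coe_set_eq, ← Nat.card_coe_set_eq,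
    Nat.card_congr (Equiv.Set.prod s t), Nat.card_prod]

end LineBasics

section PrimeField

variable {p : ℕ}

lemma line_ncard_p (hp : p.Prime) (ν μ : ZMod p) (h : ¬(ν = 0 ∧ μ = 0)) :
    (line p ν μ).ncard = p := by
  haveI := Fact.mk hp
  have hinj : Function.Injective (fun α : ZMod p => ((ν * α, μ * α) : ZMod p × ZMod p)) := by
    intro a b hab
    obtain ⟨e1, e2⟩ := Prod.ext_iff.mp hab
    rcases not_and_or.mp h with hν | hμ
    · exact mul_left_cancel₀ hν e1
    · exact mul_left_cancel₀ hμ e2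
  have hr : line p ν μ = (fun α : ZMod p => ((ν * α, μ * α) : ZMod p × ZMod p)) '' Set.univ := by
    ext x; simp [line, eq_comm]
  rw [hr, Set.ncard_image_of_injective _ hinj, Set.ncard_univ, Nat.card_eq_fintype_card,
    ZMod.card]

lemma line_inter_p (hp : p.Prime) (ν μ ν' μ' : ZMod p) (hdet : ν * μ' - μ * ν' ≠ 0) :
    line p ν μ ∩ line p ν' μ' = {((0 : ZMod p), (0 : ZMod p))} := by
  haveI := Fact.mk hp
  ext x
  constructor
  · rintro ⟨⟨α, rfl⟩, ⟨β, hβ⟩⟩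
    simp only [Prod.mk.injEq] at hβ
    obtain ⟨e1, e2⟩ := hβ
    have hα : (ν * μ' - μ * ν') * α = 0 := by
      have : (ν * μ' - μ * ν') * α = μ' * (ν * α) - ν' * (μ * α) := by ring
      rw [this, e1, e2]; ring
    have : α = 0 := by
      rcases mul_eq_zero.mp hα with h | h
      · exact absurd h hdet
      · exact h
    simp [this]
  · rintro rfl
    exact ⟨zero_mem_line p ν μ, zero_mem_line p ν' μ'⟩

/-- Canonical representatives of maximal lines mod a prime. -/
def rep (k : ℕ) : Option (ZMod k) → (ZMod k) × (ZMod k)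
  | none => (0, 1)
  | some b => (1, b)

def repLine (k : ℕ) (i : Option (ZMod k)) : Set (ZMod k × ZMod k) :=
  line k (rep k i).1 (rep k i).2

lemma rep_nonzero (hp : p.Prime) (i : Option (ZMod p)) :
    ¬((rep p i).1 = 0 ∧ (rep p i).2 = 0) := by
  haveI := Fact.mk hp
  cases i with
  | none => exact fun h => one_ne_zero h.2
  | some b => exact fun h => one_ne_zero h.1

lemma rep_det_ne (hp : p.Prime) {i j : Option (ZMod p)} (hij : i ≠ j) :
    (rep p i).1 * (rep p j).2 - (rep p i).2 * (rep p j).1 ≠ 0 := by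
  haveI := Fact.mk hp
  cases i with
  | none => cases j with
    | none => exact absurd rfl hij
    | some b => simp [rep]
  | some b => cases j with
    | none => simp [rep]
    | some b' =>
      have hbb : b ≠ b' := fun h => hij (by rw [h])
      simp [rep, sub_eq_zero]
      exact fun h => hbb h.symm

lemma repLine_ncard (hp : p.Prime) (i : Option (ZMod p)) : (repLine p i).ncard = p :=
  line_ncard_p hp _ _ (rep_nonzero hp i)

lemma repLine_inter (hp : p.Prime) {i j : Option (ZMod p)} (hij : i ≠ j) :
    repLine p i ∩ repLine p j = {((0 : ZMod p), (0 : ZMod p))} :=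
  line_inter_p hp _ _ _ _ (rep_det_ne hp hij)

lemma rep_surj (hp : p.Prime) (ν μ : ZMod p) (h : ¬(ν = 0 ∧ μ = 0)) :
    ∃ i, line p ν μ = repLine p i := by
  haveI := Fact.mk hp
  by_cases hν : ν = 0
  · have hμ : μ ≠ 0 := fun h0 => h ⟨hν, h0⟩
    refine ⟨none, ?_⟩
    subst hν
    have := line_smul p (Units.mk0 μ hμ) 0 1
    simp only [Units.val_mk0, mul_zero, mul_one] at this
    rw [this]; rfl
  · refine ⟨some (ν⁻¹ * μ), ?_⟩
    have := line_smul p (Units.mk0 ν⁻¹ (inv_ne_zero hν)) ν μ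
    simp only [Units.val_mk0, inv_mul_cancel₀ hν] at this
    rw [← this]; rfl

end PrimeField

section CRT

variable {p q : ℕ}

/-- CRT equivalence on the plane, regrouped by prime. -/
def Phi (p q : ℕ) (c : Nat.Coprime p q) :
    (ZMod (p * q) × ZMod (p * q)) ≃ (ZMod p × ZMod p) × (ZMod q × ZMod q) :=
  ((ZMod.chineseRemainder c).toEquiv.prodCongr (ZMod.chineseRemainder c).toEquiv).trans
    (Equiv.prodProdProdComm _ _ _ _)

lemma Phi_apply (c : Nat.Coprime p q) (x y : ZMod (p * q)) :
    Phi p q c (x, y) = (((ZMod.chineseRemainder c x).1, (ZMod.chineseRemainder c y).1),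
      ((ZMod.chineseRemainder c x).2, (ZMod.chineseRemainder c y).2)) := rfl

lemma Phi_image_line (c : Nat.Coprime p q) (ν μ : ZMod (p * q)) :
    Phi p q c '' line (p * q) ν μ =
      line p (ZMod.chineseRemainder c ν).1 (ZMod.chineseRemainder c μ).1 ×ˢ
      line q (ZMod.chineseRemainder c ν).2 (ZMod.chineseRemainder c μ).2 := by
  set φ := ZMod.chineseRemainder c
  ext x
  constructor
  · rintro ⟨y, ⟨α, rfl⟩, rfl⟩
    constructor
    · exact ⟨(φ α).1, by simp [Phi_apply, map_mul, φ]⟩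
    · exact ⟨(φ α).2, by simp [Phi_apply, map_mul, φ]⟩
  · obtain ⟨x1, x2⟩ := x
    rintro ⟨⟨α₁, rfl⟩, ⟨α₂, rfl⟩⟩
    set α := φ.symm (α₁, α₂) with hα
    have hφα : φ α = (α₁, α₂) := φ.apply_symm_apply _
    refine ⟨(ν * α, μ * α), ⟨α, rfl⟩, ?_⟩
    simp [Phi_apply, map_mul, hφα, φ]

lemma ncard_line_eq (c : Nat.Coprime p q) (ν μ : ZMod (p * q)) :
    (line (p * q) ν μ).ncard =
      (line p (ZMod.chineseRemainder c ν).1 (ZMod.chineseRemainder c μ).1).ncard *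
      (line q (ZMod.chineseRemainder c ν).2 (ZMod.chineseRemainder c μ).2).ncard := by
  rw [← Set.ncard_image_of_injective _ (Phi p q c).injective, Phi_image_line, ncard_prod']

/-- The maximal line indexed by a pair of projective-line representatives. -/
def vecc (p q : ℕ) (c : Nat.Coprime p q) (i : Option (ZMod p) × Option (ZMod q)) :
    ZMod (p * q) × ZMod (p * q) :=
  ((ZMod.chineseRemainder c).symm ((rep p i.1).1, (rep q i.2).1),
   (ZMod.chineseRemainder c).symm ((rep p i.1).2, (rep q i.2).2))

def LL (p q : ℕ) (c : Nat.Coprime p q) (i : Option (ZMod p) × Option (ZMod q)) :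
    Set (ZMod (p * q) × ZMod (p * q)) :=
  line (p * q) (vecc p q c i).1 (vecc p q c i).2

lemma Phi_LL (c : Nat.Coprime p q) (i : Option (ZMod p) × Option (ZMod q)) :
    Phi p q c '' LL p q c i = repLine p i.1 ×ˢ repLine q i.2 := by
  rw [LL, Phi_image_line]
  simp [vecc, RingEquiv.apply_symm_apply, repLine]

lemma LL_ncard (hp : p.Prime) (hq : q.Prime) (c : Nat.Coprime p q)
    (i : Option (ZMod p) × Option (ZMod q)) : (LL p q c i).ncard = p * q := by
  rw [← Set.ncard_image_of_injective _ (Phi p q c).injective, Phi_LL, ncard_prod',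
    repLine_ncard hp, repLine_ncard hq]

lemma LL_mem (hp : p.Prime) (hq : q.Prime) (c : Nat.Coprime p q)
    (i : Option (ZMod p) × Option (ZMod q)) : LL p q c i ∈ maximalLines (p * q) :=
  ⟨⟨_, _, rfl⟩, LL_ncard hp hq c i⟩

lemma Phi_LL_inter (c : Nat.Coprime p q) (i j : Option (ZMod p) × Option (ZMod q)) :
    Phi p q c '' (LL p q c i ∩ LL p q c j) =
      (repLine p i.1 ∩ repLine p j.1) ×ˢ (repLine q i.2 ∩ repLine q j.2) := by
  rw [Set.image_inter (Phi p q c).injective, Phi_LL, Phi_LL, Set.prod_inter_prod]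

lemma LL_inter_ncard (hp : p.Prime) (hq : q.Prime) (c : Nat.Coprime p q)
    (i j : Option (ZMod p) × Option (ZMod q)) :
    (LL p q c i ∩ LL p q c j).ncard =
      (if i.1 = j.1 then p else 1) * (if i.2 = j.2 then q else 1) := by
  rw [← Set.ncard_image_of_injective _ (Phi p q c).injective, Phi_LL_inter, ncard_prod']
  congr 1
  · by_cases h : i.1 = j.1
    · rw [h, Set.inter_self, repLine_ncard hp, if_pos rfl]
    · rw [repLine_inter hp h, if_neg h, Set.ncard_singleton]
  · by_cases h : i.2 = j.2
    · rw [h, Set.inter_self, repLine_ncard hq, if_pos rfl]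
    · rw [repLine_inter hq h, if_neg h, Set.ncard_singleton]

lemma LL_inj (hp : p.Prime) (hq : q.Prime) (c : Nat.Coprime p q) :
    Function.Injective (LL p q c) := by
  intro i j hij
  by_contra hne
  have h1 : (LL p q c i ∩ LL p q c j).ncard = p * q := by
    rw [hij, Set.inter_self, LL_ncard hp hq]
  rw [LL_inter_ncard hp hq c i j] at h1
  have hcases : ¬(i.1 = j.1 ∧ i.2 = j.2) := fun h => hne (Prod.ext h.1 h.2)
  rcases not_and_or.mp hcases with h | h
  · rw [if_neg h] at h1
    by_cases h2 : i.2 = j.2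
    · rw [if_pos h2, one_mul] at h1
      exact absurd h1.symm (by nlinarith [hp.two_le, hq.two_le])
    · rw [if_neg h2, one_mul] at h1
      exact absurd h1.symm (by nlinarith [hp.two_le, hq.two_le])
  · rw [if_neg h] at h1
    by_cases h2 : i.1 = j.1
    · rw [if_pos h2, mul_one] at h1
      exact absurd h1.symm (by nlinarith [hp.two_le, hq.two_le])
    · rw [if_neg h2, one_mul] at h1
      exact absurd h1.symm (by nlinarith [hp.two_le, hq.two_le])

end CRT

section Surj

variable {p q : ℕ}

lemma LL_surj (hp : p.Prime) (hq : q.Prime) (c : Nat.Coprime p q)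
    {M : Set (ZMod (p * q) × ZMod (p * q))} (hM : M ∈ maximalLines (p * q)) :
    ∃ i, M = LL p q c i := by
  obtain ⟨⟨ν, μ, rfl⟩, hcard⟩ := hM
  set φ := ZMod.chineseRemainder c
  set A := line p (φ ν).1 (φ μ).1 with hA
  set B := line q (φ ν).2 (φ μ).2 with hB
  have hprod : A.ncard * B.ncard = p * q := by
    rw [← ncard_line_eq c ν μ]; exact hcard
  have hAcases : (¬((φ ν).1 = 0 ∧ (φ μ).1 = 0) ∧ A.ncard = p) ∨ A.ncard = 1 := by
    by_cases h : (φ ν).1 = 0 ∧ (φ μ).1 = 0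
    · right; rw [hA, h.1, h.2, line_zero, Set.ncard_singleton]
    · left; exact ⟨h, line_ncard_p hp _ _ h⟩
  have hBcases : (¬((φ ν).2 = 0 ∧ (φ μ).2 = 0) ∧ B.ncard = q) ∨ B.ncard = 1 := by
    by_cases h : (φ ν).2 = 0 ∧ (φ μ).2 = 0
    · right; rw [hB, h.1, h.2, line_zero, Set.ncard_singleton]
    · left; exact ⟨h, line_ncard_p hq _ _ h⟩
  have hp2 := hp.two_le
  have hq2 := hq.two_le
  rcases hAcases with ⟨hA0, hAp⟩ | hA1
  · rcases hBcases with ⟨hB0, hBq⟩ | hB1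
    · -- the good case
      obtain ⟨i₁, hi₁⟩ := rep_surj hp _ _ hA0
      obtain ⟨i₂, hi₂⟩ := rep_surj hq _ _ hB0
      refine ⟨(i₁, i₂), ?_⟩
      have himg : Phi p q c '' line (p * q) ν μ = Phi p q c '' LL p q c (i₁, i₂) := by
        rw [Phi_image_line, Phi_LL, ← hi₁, ← hi₂]
      exact Set.image_injective.mpr (Phi p q c).injective himg
    · rw [hAp, hB1, mul_one] at hprod
      nlinarith
  · rw [hA1, one_mul] at hprod
    rcases hBcases with ⟨hB0, hBq⟩ | hB1
    · rw [hBq] at hprod; nlinarith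
    · rw [hB1] at hprod; nlinarith

lemma LL_inter_eq_singleton_iff (hp : p.Prime) (hq : q.Prime) (hpq : p ≠ q)
    (c : Nat.Coprime p q) {i j : Option (ZMod p) × Option (ZMod q)} (hij : i ≠ j) :
    LL p q c i ∩ LL p q c j = {((0 : ZMod (p * q)), (0 : ZMod (p * q)))} ↔
      (i.1 ≠ j.1 ∧ i.2 ≠ j.2) := by
  have hp2 := hp.two_le
  have hq2 := hq.two_le
  constructor
  · intro h
    have h1 := congrArg Set.ncard h
    rw [LL_inter_ncard hp hq, Set.ncard_singleton] at h1
    constructor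
    · intro he
      rw [if_pos he] at h1
      rcases ite_eq_or_eq (i.2 = j.2) q 1 with h2 | h2 <;> rw [h2] at h1 <;> nlinarith
    · intro he
      rw [if_pos he] at h1
      rcases ite_eq_or_eq (i.1 = j.1) p 1 with h2 | h2 <;> rw [h2] at h1 <;> nlinarith
  · rintro ⟨h1, h2⟩
    have himg : Phi p q c '' (LL p q c i ∩ LL p q c j) =
        Phi p q c '' {((0 : ZMod (p * q)), (0 : ZMod (p * q)))} := by
      rw [Phi_LL_inter, repLine_inter hp h1, repLine_inter hq h2,
        Set.singleton_prod_singleton, Set.image_singleton]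
      congr 1
      rw [Phi_apply]
      simp
    exact Set.image_injective.mpr (Phi p q c).injective himg

lemma LL_inter_ncard_eq_q_iff (hp : p.Prime) (hq : q.Prime) (hpq : p ≠ q)
    (c : Nat.Coprime p q) {i j : Option (ZMod p) × Option (ZMod q)} (hij : i ≠ j) :
    (LL p q c i ∩ LL p q c j).ncard = q ↔ (i.1 ≠ j.1 ∧ i.2 = j.2) := by
  have hp2 := hp.two_le
  have hq2 := hq.two_le
  rw [LL_inter_ncard hp hq]
  by_cases h1 : i.1 = j.1 <;> by_cases h2 : i.2 = j.2
  · exact absurd (Prod.ext h1 h2) hij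
  · simp only [if_pos h1, if_neg h2, mul_one]
    constructor
    · intro h; exact absurd h hpq
    · rintro ⟨h, -⟩; exact absurd h1 h
  · simp only [if_neg h1, if_pos h2, one_mul]
    exact ⟨fun _ => ⟨h1, h2⟩, fun _ => trivial⟩
  · simp only [if_neg h1, if_neg h2, one_mul]
    constructor
    · intro h; omega
    · rintro ⟨-, h⟩; exact absurd h h2

lemma LL_inter_ncard_eq_p_iff (hp : p.Prime) (hq : q.Prime) (hpq : p ≠ q)
    (c : Nat.Coprime p q) {i j : Option (ZMod p) × Option (ZMod q)} (hij : i ≠ j) :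
    (LL p q c i ∩ LL p q c j).ncard = p ↔ (i.1 = j.1 ∧ i.2 ≠ j.2) := by
  have hp2 := hp.two_le
  have hq2 := hq.two_le
  rw [LL_inter_ncard hp hq]
  by_cases h1 : i.1 = j.1 <;> by_cases h2 : i.2 = j.2
  · exact absurd (Prod.ext h1 h2) hij
  · simp only [if_pos h1, if_neg h2, mul_one]
    exact ⟨fun _ => ⟨h1, h2⟩, fun _ => trivial⟩
  · simp only [if_neg h1, if_pos h2, one_mul]
    constructor
    · intro h; exact absurd h.symm hpq
    · rintro ⟨h, -⟩; exact absurd h h1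
  · simp only [if_neg h1, if_neg h2, one_mul]
    constructor
    · intro h; omega
    · rintro ⟨h, -⟩; exact absurd h h1

section Counting

lemma card_eq_subtype {A : Type*} [Fintype A] [DecidableEq A] :
    Fintype.card {x : A × A // x.1 = x.2} = Fintype.card A :=
  Fintype.card_congr
    ⟨fun x => x.1.1, fun a => ⟨(a, a), rfl⟩,
      by rintro ⟨⟨a, b⟩, h⟩; cases h; rfl, fun a => rfl⟩

lemma card_ne_subtype {A : Type*} [Fintype A] [DecidableEq A] :
    Fintype.card {x : A × A // ¬(x.1 = x.2)}
      = Fintype.card A * Fintype.card A - Fintype.card A := by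
  calc Fintype.card {x : A × A // ¬(x.1 = x.2)}
      = Fintype.card (A × A) - Fintype.card {x : A × A // x.1 = x.2} :=
        Fintype.card_subtype_compl _
    _ = Fintype.card A * Fintype.card A - Fintype.card A := by
        rw [card_eq_subtype, Fintype.card_prod]

lemma card_cond_prod {A B : Type*} [Fintype A] [Fintype B]
    (pa : A → A → Prop) (pb : B → B → Prop)
    [∀ a a', Decidable (pa a a')] [∀ b b', Decidable (pb b b')] :
    Fintype.card {x : (A × B) × (A × B) // pa x.1.1 x.2.1 ∧ pb x.1.2 x.2.2}
      = Fintype.card {y : A × A // pa y.1 y.2} * Fintype.card {z : B × B // pb z.1 z.2} := by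
  rw [← Fintype.card_prod]
  exact Fintype.card_congr
    ⟨fun x => (⟨(x.1.1.1, x.1.2.1), x.2.1⟩, ⟨(x.1.1.2, x.1.2.2), x.2.2⟩),
     fun y => ⟨((y.1.1.1, y.2.1.1), (y.1.1.2, y.2.1.2)), y.1.2, y.2.2⟩,
     by rintro ⟨⟨⟨a, b⟩, ⟨a', b'⟩⟩, h⟩; rfl,
     by rintro ⟨⟨⟨a, a'⟩, ha⟩, ⟨⟨b, b'⟩, hb⟩⟩; rfl⟩

lemma card_filter_eq_two_mul {α : Type*} {I : Type*} [Fintype I] [DecidableEq I]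
    (L : I → Set α) (hL : Function.Injective L)
    (r : I → I → Prop) [DecidableRel r]
    (hsymm : ∀ i j, r i j → r j i) :
    (Finset.univ.filter (fun x : I × I => ¬(x.1 = x.2) ∧ r x.1 x.2)).card
      = 2 * ((fun x : I × I => ({L x.1, L x.2} : Set (Set α))) ''
          {x : I × I | ¬(x.1 = x.2) ∧ r x.1 x.2}).ncard := by
  classical
  set g : I × I → Set (Set α) := fun x => ({L x.1, L x.2} : Set (Set α)) with hg
  set F := Finset.univ.filter (fun x : I × I => ¬(x.1 = x.2) ∧ r x.1 x.2) with hF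
  have hset : {x : I × I | ¬(x.1 = x.2) ∧ r x.1 x.2} = ↑F := by
    ext x; simp [hF]
  rw [hset, ← Finset.coe_image, Set.ncard_coe_finset]
  have hfib : ∀ b ∈ F.image g, (F.filter (fun a => g a = b)).card = 2 := by
    intro b hb
    obtain ⟨x, hx, rfl⟩ := Finset.mem_image.mp hb
    have hxF := Finset.mem_filter.mp hx
    have hxne : ¬(x.1 = x.2) := hxF.2.1
    have hxr : r x.1 x.2 := hxF.2.2
    have hkey : F.filter (fun a => g a = g x) = {x, x.swap} := by
      ext y
      simp only [Finset.mem_filter, Finset.mem_insert, Finset.mem_singleton]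
      constructor
      · rintro ⟨hyF, hgy⟩
        rcases Set.pair_eq_pair_iff.mp hgy with ⟨e1, e2⟩ | ⟨e1, e2⟩
        · left; exact Prod.ext (hL e1) (hL e2)
        · right; exact Prod.ext (hL e1) (hL e2)
      · rintro (rfl | rfl)
        · exact ⟨hx, rfl⟩
        · refine ⟨Finset.mem_filter.mpr ⟨Finset.mem_univ _,
            fun h => hxne h.symm, hsymm _ _ hxr⟩, ?_⟩
          exact Set.pair_comm (L x.2) (L x.1)
    rw [hkey]
    exact Finset.card_pair (fun h => hxne (congrArg Prod.fst h))
  calc F.card = ∑ b ∈ F.image g, (F.filter (fun a => g a = b)).card :=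
        Finset.card_eq_sum_card_image g F
    _ = ∑ _b ∈ F.image g, 2 := Finset.sum_congr rfl hfib
    _ = 2 * (F.image g).card := by rw [Finset.sum_const, smul_eq_mul, mul_comm]

lemma linePairs_eq_image {n : ℕ} {I : Type*} (L : I → Set (ZMod n × ZMod n))
    (hmax : ∀ i, L i ∈ maximalLines n) (hinj : Function.Injective L)
    (hsurj : ∀ M ∈ maximalLines n, ∃ i, M = L i)
    (P : Set (ZMod n × ZMod n) → Prop) (r : I → I → Prop)
    (hr : ∀ i j, ¬(i = j) → (P (L i ∩ L j) ↔ r i j)) :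
    linePairs n P = (fun x : I × I => ({L x.1, L x.2} : Set (Set (ZMod n × ZMod n)))) ''
      {x : I × I | ¬(x.1 = x.2) ∧ r x.1 x.2} := by
  ext s
  constructor
  · rintro ⟨A, B, hAB, rfl, hA, hB, hP⟩
    obtain ⟨i, rfl⟩ := hsurj A hA
    obtain ⟨j, rfl⟩ := hsurj B hB
    have hij : ¬(i = j) := fun h => hAB (by rw [h])
    exact ⟨(i, j), ⟨hij, (hr i j hij).mp hP⟩, rfl⟩
  · rintro ⟨⟨i, j⟩, ⟨hij, hrij⟩, rfl⟩
    exact ⟨L i, L j, fun h => hij (hinj h), rfl, hmax i, hmax j, (hr i j hij).mpr hrij⟩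

end Counting

/-- Let `d = d₁d₂` with `d₁, d₂` distinct primes and `ψ(d) = (d₁+1)(d₂+1)`.  Among the
`ψ(d)(ψ(d)-1)/2` unordered pairs of distinct maximal lines through the origin in
`Z(d) × Z(d)`, exactly `d₁ψ(d)/2` pairs intersect in `d₂` points, exactly `d₂ψ(d)/2`
pairs intersect in `d₁` points, and exactly `dψ(d)/2` pairs intersect only at the
origin.  (The counts are stated multiplied by 2 to avoid division.) -/
theorem count_maximal_line_pairs (d1 d2 : ℕ)
    (h1 : d1.Prime) (h2 : d2.Prime) (hne : d1 ≠ d2) :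
    2 * (linePairs (d1 * d2) (fun _ => True)).ncard
        = ((d1 + 1) * (d2 + 1)) * ((d1 + 1) * (d2 + 1) - 1) ∧
    2 * (linePairs (d1 * d2) (fun I => I.ncard = d2)).ncard
        = d1 * ((d1 + 1) * (d2 + 1)) ∧
    2 * (linePairs (d1 * d2) (fun I => I.ncard = d1)).ncard
        = d2 * ((d1 + 1) * (d2 + 1)) ∧
    2 * (linePairs (d1 * d2)
          (fun I => I = {((0 : ZMod (d1 * d2)), (0 : ZMod (d1 * d2)))})).ncard
        = (d1 * d2) * ((d1 + 1) * (d2 + 1)) := by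
  classical
  have c : Nat.Coprime d1 d2 := (Nat.coprime_primes h1 h2).mpr hne
  haveI : NeZero d1 := ⟨h1.pos.ne'⟩
  haveI : NeZero d2 := ⟨h2.pos.ne'⟩
  have hinj := LL_inj h1 h2 c
  have hmax := LL_mem h1 h2 c
  have hsurj : ∀ M ∈ maximalLines (d1 * d2), ∃ i, M = LL d1 d2 c i :=
    fun M hM => LL_surj h1 h2 c hM
  have hA : Fintype.card (Option (ZMod d1)) = d1 + 1 := by
    rw [Fintype.card_option, ZMod.card]
  have hB : Fintype.card (Option (ZMod d2)) = d2 + 1 := by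
    rw [Fintype.card_option, ZMod.card]
  have e1 : (d1 + 1) * (d1 + 1) - (d1 + 1) = (d1 + 1) * d1 := by
    rw [Nat.mul_succ, Nat.add_sub_cancel]
  have e2 : (d2 + 1) * (d2 + 1) - (d2 + 1) = (d2 + 1) * d2 := by
    rw [Nat.mul_succ, Nat.add_sub_cancel]
  refine ⟨?_, ?_, ?_, ?_⟩
  · -- all pairs
    rw [linePairs_eq_image (LL d1 d2 c) hmax hinj hsurj _ (fun _ _ => True)
      (fun i j hij => ⟨fun _ => trivial, fun _ => trivial⟩)]
    rw [← card_filter_eq_two_mul (LL d1 d2 c) hinj _ (fun i j h => trivial)]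
    rw [← Fintype.card_subtype]
    have hc : Fintype.card
        {x : (Option (ZMod d1) × Option (ZMod d2)) × (Option (ZMod d1) × Option (ZMod d2)) //
          ¬(x.1 = x.2) ∧ True}
        = Fintype.card
          {x : (Option (ZMod d1) × Option (ZMod d2)) × (Option (ZMod d1) × Option (ZMod d2)) //
            ¬(x.1 = x.2)} :=
      Fintype.card_congr (Equiv.subtypeEquivRight (fun x => by rw [and_true]))
    rw [hc, card_ne_subtype, Fintype.card_prod, hA, hB]
    obtain ⟨M, hM⟩ : ∃ M, (d1 + 1) * (d2 + 1) = M + 1 :=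
      ⟨d1 * (d2 + 1) + d2, by ring⟩
    rw [hM]
    rw [Nat.add_sub_cancel, Nat.mul_succ, Nat.add_sub_cancel]
  · -- ncard = d2
    rw [linePairs_eq_image (LL d1 d2 c) hmax hinj hsurj _
      (fun i j => ¬(i.1 = j.1) ∧ i.2 = j.2)
      (fun i j hij => LL_inter_ncard_eq_q_iff h1 h2 hne c hij)]
    rw [← card_filter_eq_two_mul (LL d1 d2 c) hinj
      (fun i j => ¬(i.1 = j.1) ∧ i.2 = j.2)
      (fun i j h => ⟨fun e => h.1 e.symm, h.2.symm⟩)]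
    rw [← Fintype.card_subtype]
    have hc : Fintype.card
        {x : (Option (ZMod d1) × Option (ZMod d2)) × (Option (ZMod d1) × Option (ZMod d2)) //
          ¬(x.1 = x.2) ∧ (¬(x.1.1 = x.2.1) ∧ x.1.2 = x.2.2)}
        = Fintype.card
          {x : (Option (ZMod d1) × Option (ZMod d2)) × (Option (ZMod d1) × Option (ZMod d2)) //
            ¬(x.1.1 = x.2.1) ∧ x.1.2 = x.2.2} :=
      Fintype.card_congr (Equiv.subtypeEquivRight (fun x =>
        ⟨fun h => h.2, fun h => ⟨fun e => h.1 (congrArg Prod.fst e), h⟩⟩))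
    rw [hc, card_cond_prod (fun a a' => ¬(a = a')) (fun b b' => b = b'),
      card_ne_subtype, card_eq_subtype, hA, hB, e1]
    ring
  · -- ncard = d1
    rw [linePairs_eq_image (LL d1 d2 c) hmax hinj hsurj _
      (fun i j => i.1 = j.1 ∧ ¬(i.2 = j.2))
      (fun i j hij => LL_inter_ncard_eq_p_iff h1 h2 hne c hij)]
    rw [← card_filter_eq_two_mul (LL d1 d2 c) hinj
      (fun i j => i.1 = j.1 ∧ ¬(i.2 = j.2))
      (fun i j h => ⟨h.1.symm, fun e => h.2 e.symm⟩)]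
    rw [← Fintype.card_subtype]
    have hc : Fintype.card
        {x : (Option (ZMod d1) × Option (ZMod d2)) × (Option (ZMod d1) × Option (ZMod d2)) //
          ¬(x.1 = x.2) ∧ (x.1.1 = x.2.1 ∧ ¬(x.1.2 = x.2.2))}
        = Fintype.card
          {x : (Option (ZMod d1) × Option (ZMod d2)) × (Option (ZMod d1) × Option (ZMod d2)) //
            x.1.1 = x.2.1 ∧ ¬(x.1.2 = x.2.2)} :=
      Fintype.card_congr (Equiv.subtypeEquivRight (fun x =>
        ⟨fun h => h.2, fun h => ⟨fun e => h.2 (congrArg Prod.snd e), h⟩⟩))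
    rw [hc, card_cond_prod (fun a a' => a = a') (fun b b' => ¬(b = b')),
      card_ne_subtype, card_eq_subtype, hA, hB, e2]
    ring
  · -- origin only
    rw [linePairs_eq_image (LL d1 d2 c) hmax hinj hsurj _
      (fun i j => ¬(i.1 = j.1) ∧ ¬(i.2 = j.2))
      (fun i j hij => LL_inter_eq_singleton_iff h1 h2 hne c hij)]
    rw [← card_filter_eq_two_mul (LL d1 d2 c) hinj
      (fun i j => ¬(i.1 = j.1) ∧ ¬(i.2 = j.2))
      (fun i j h => ⟨fun e => h.1 e.symm, fun e => h.2 e.symm⟩)]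
    rw [← Fintype.card_subtype]
    have hc : Fintype.card
        {x : (Option (ZMod d1) × Option (ZMod d2)) × (Option (ZMod d1) × Option (ZMod d2)) //
          ¬(x.1 = x.2) ∧ (¬(x.1.1 = x.2.1) ∧ ¬(x.1.2 = x.2.2))}
        = Fintype.card
          {x : (Option (ZMod d1) × Option (ZMod d2)) × (Option (ZMod d1) × Option (ZMod d2)) //
            ¬(x.1.1 = x.2.1) ∧ ¬(x.1.2 = x.2.2)} :=
      Fintype.card_congr (Equiv.subtypeEquivRight (fun x =>
        ⟨fun h => h.2, fun h => ⟨fun e => h.1 (congrArg Prod.fst e), h⟩⟩))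
    rw [hc, card_cond_prod (fun a a' => ¬(a = a')) (fun b b' => ¬(b = b')),
      card_ne_subtype, card_ne_subtype, hA, hB, e1, e2]
    ring
end Surj
end

section
/- Let d = d_1 d_2 with d_1, d_2 distinct primes. The maximum number of weak mutually unbiased bases in C^d (each such basis being a tensor product of a mutually unbiased basis of C^{d_1} with one of C^{d_2}) is ψ(d) = (d_1+1)(d_2+1), given that C^{d_i} admits at most d_i+1 pairwise mutually unbiased bases. -/
open Complex Finset

section Char
variable (p : ℕ) [NeZero p]

noncomputable def zeta (p : ℕ) : ℂ := Complex.exp (2 * Real.pi * Complex.I / p)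

noncomputable def zchar (p : ℕ) [NeZero p] : ZMod p → ℂ := fun a => zeta p ^ a.val

lemma zeta_pow_p : zeta p ^ p = 1 :=
  (Complex.isPrimitiveRoot_exp p (NeZero.ne p)).pow_eq_one

lemma zeta_pow_mod (m : ℕ) : zeta p ^ (m % p) = zeta p ^ m := by
  conv_rhs => rw [← Nat.div_add_mod m p]
  rw [pow_add, pow_mul, zeta_pow_p, one_pow, one_mul]

lemma zchar_add (a b : ZMod p) : zchar p (a + b) = zchar p a * zchar p b := by
  rw [zchar, zchar, zchar, ZMod.val_add, zeta_pow_mod, pow_add]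

lemma zchar_zero : zchar p 0 = 1 := by
  simp [zchar, ZMod.val_zero]

lemma abs_zeta : ‖zeta p‖ = 1 := by
  rw [zeta, Complex.norm_exp]
  have : (2 * Real.pi * Complex.I / p).re = 0 := by
    simp [Complex.div_re]
  rw [this, Real.exp_zero]

lemma abs_zchar (a : ZMod p) : ‖zchar p a‖ = 1 := by
  rw [zchar, norm_pow, abs_zeta, one_pow]

lemma zchar_ne_zero (a : ZMod p) : zchar p a ≠ 0 := by
  intro h
  have := abs_zchar p a
  rw [h] at this; simp at this

lemma conj_zchar (a : ZMod p) : (starRingEnd ℂ) (zchar p a) = zchar p (-a) := by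
  have h1 : zchar p a * zchar p (-a) = 1 := by
    rw [← zchar_add, add_neg_cancel, zchar_zero]
  have h2 : zchar p a * (starRingEnd ℂ) (zchar p a) = 1 := by
    rw [mul_comm, Complex.conj_mul', abs_zchar]
    norm_num
  have := zchar_ne_zero p a
  rw [← h2] at h1
  exact (mul_left_cancel₀ this h1.symm)
end Char

section Sums
variable (p : ℕ) [NeZero p]

noncomputable def zmodFinEquiv (p : ℕ) [NeZero p] : Fin p ≃ ZMod p where
  toFun i := ((i : ℕ) : ZMod p)
  invFun a := ⟨a.val, a.val_lt⟩
  left_inv i := by ext; simp [ZMod.val_cast_of_lt i.2]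
  right_inv a := by simp [ZMod.natCast_zmod_val]

lemma sum_zchar (hp : 1 < p) : ∑ x : ZMod p, zchar p x = 0 := by
  rw [← (zmodFinEquiv p).sum_comp]
  have : ∀ i : Fin p, zchar p (zmodFinEquiv p i) = zeta p ^ (i : ℕ) := by
    intro i
    rw [zchar]
    congr 1
    exact ZMod.val_cast_of_lt i.2
  rw [Fintype.sum_congr _ _ this, Fin.sum_univ_eq_sum_range]
  exact (Complex.isPrimitiveRoot_exp p (NeZero.ne p)).geom_sum_eq_zero hp

lemma sum_zchar_mul (p : ℕ) [Fact p.Prime] (c : ZMod p) :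
    ∑ x : ZMod p, zchar p (c * x) = if c = 0 then (p : ℂ) else 0 := by
  split_ifs with hc
  · simp [hc, zchar_zero, Finset.card_univ, ZMod.card]
  · rw [show ∑ x : ZMod p, zchar p (c * x) = ∑ x : ZMod p, zchar p x from
      Fintype.sum_equiv (Equiv.mulLeft₀ c hc) _ _ (fun x => by simp [Equiv.mulLeft₀])]
    exact sum_zchar p (Fact.out : p.Prime).one_lt
end Sums

section Gauss
variable (p : ℕ) [Fact p.Prime]

noncomputable def gsum (p : ℕ) [NeZero p] (c b : ZMod p) : ℂ :=
  ∑ z : ZMod p, zchar p (c * z ^ 2 + b * z)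

lemma conj_gsum (c b : ZMod p) :
    (starRingEnd ℂ) (gsum p c b) = ∑ z : ZMod p, zchar p (-(c * z ^ 2 + b * z)) := by
  rw [gsum, map_sum]
  exact Finset.sum_congr rfl fun z _ => conj_zchar p _

lemma zmod_two_ne_zero (hp2 : p ≠ 2) : (2 : ZMod p) ≠ 0 := by
  intro h
  have : p ∣ 2 := by
    have := (ZMod.natCast_eq_zero_iff 2 p).mp (by exact_mod_cast h)
    exact this
  exact hp2 ((Nat.prime_dvd_prime_iff_eq Fact.out Nat.prime_two).mp this)

lemma gsum_mul_conj (hp2 : p ≠ 2) {c : ZMod p} (hc : c ≠ 0) (b : ZMod p) :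
    gsum p c b * (starRingEnd ℂ) (gsum p c b) = p := by
  have h2 : (2 : ZMod p) ≠ 0 := zmod_two_ne_zero p hp2
  rw [conj_gsum, gsum, Finset.sum_mul_sum, Finset.sum_comm]
  have key : ∀ w : ZMod p,
      (∑ z : ZMod p, zchar p (c * z ^ 2 + b * z) * zchar p (-(c * w ^ 2 + b * w)))
        = ∑ u : ZMod p, zchar p (c * u ^ 2 + b * u) * zchar p (2 * c * u * w) := by
    intro w
    rw [show (∑ z : ZMod p, zchar p (c * z ^ 2 + b * z) * zchar p (-(c * w ^ 2 + b * w)))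
        = ∑ u : ZMod p, zchar p (c * (u + w) ^ 2 + b * (u + w)) * zchar p (-(c * w ^ 2 + b * w))
      from (Fintype.sum_equiv (Equiv.addRight w) _ _ (fun u => rfl)).symm]
    refine Finset.sum_congr rfl fun u _ => ?_
    rw [← zchar_add, ← zchar_add]
    congr 1
    ring
  rw [Finset.sum_congr rfl fun w _ => key w]
  rw [Finset.sum_comm]
  have inner : ∀ u : ZMod p,
      (∑ w : ZMod p, zchar p (c * u ^ 2 + b * u) * zchar p (2 * c * u * w))
        = zchar p (c * u ^ 2 + b * u) * (if (2 * c * u) = 0 then (p : ℂ) else 0) := by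
    intro u
    rw [← Finset.mul_sum]
    congr 1
    exact sum_zchar_mul p (2 * c * u)
  rw [Finset.sum_congr rfl fun u _ => inner u]
  rw [Finset.sum_eq_single_of_mem 0 (Finset.mem_univ 0)]
  · simp [zchar_zero]
  · intro u _ hu
    have : 2 * c * u ≠ 0 := by
      intro h
      rcases mul_eq_zero.mp h with h' | h'
      · rcases mul_eq_zero.mp h' with h'' | h''
        · exact h2 h''
        · exact hc h''
      · exact hu h'
    rw [if_neg this, mul_zero]

lemma abs_gsum (hp2 : p ≠ 2) {c : ZMod p} (hc : c ≠ 0) (b : ZMod p) :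
    ‖gsum p c b‖ = Real.sqrt p := by
  have h := gsum_mul_conj p hp2 hc b
  rw [Complex.mul_conj] at h
  have : Complex.normSq (gsum p c b) = (p : ℝ) := by exact_mod_cast h
  rw [Complex.norm_def, this]

lemma gsum_zero_left (b : ZMod p) : gsum p 0 b = if b = 0 then (p : ℂ) else 0 := by
  rw [gsum, ← sum_zchar_mul p b]
  exact Finset.sum_congr rfl fun z _ => by rw [zero_mul, zero_add]
end Gauss

section Bases
open scoped InnerProductSpace
variable (p : ℕ) [NeZero p]

lemma euclid_inner {n : Type*} [Fintype n] (f g : EuclideanSpace ℂ n) :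
    ⟪f, g⟫_ℂ = ∑ x, (starRingEnd ℂ) (f x) * g x := by
  simp [PiLp.inner_apply, RCLike.inner_apply]
  exact Finset.sum_congr rfl fun _ _ => mul_comm _ _

lemma abs_inner_swap {E : Type*} [NormedAddCommGroup E] [InnerProductSpace ℂ E] (f g : E) :
    ‖⟪f, g⟫_ℂ‖ = ‖⟪g, f⟫_ℂ‖ := by
  rw [← inner_conj_symm, Complex.norm_conj]

lemma sum_fin_zmod (f : ZMod p → ℂ) :
    ∑ x : Fin p, f (((x : ℕ) : ZMod p)) = ∑ z : ZMod p, f z :=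
  Fintype.sum_equiv (zmodFinEquiv p) _ _ (fun x => rfl)

noncomputable def stdB (p : ℕ) [NeZero p] : ZMod p → EuclideanSpace ℂ (Fin p) :=
  fun s => WithLp.toLp 2 (fun (x : Fin p) => if ((x : ℕ) : ZMod p) = s then 1 else 0)

noncomputable def qB (p : ℕ) [NeZero p] (r : ZMod p) : ZMod p → EuclideanSpace ℂ (Fin p) :=
  fun s => WithLp.toLp 2 (fun (x : Fin p) => zchar p (r * ((x : ℕ) : ZMod p) ^ 2 + s * ((x : ℕ) : ZMod p))
      * ((Real.sqrt p : ℂ))⁻¹)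

lemma sqp_sq : ((Real.sqrt p : ℂ))⁻¹ * ((Real.sqrt p : ℂ))⁻¹ = ((p : ℂ))⁻¹ := by
  rw [← mul_inv]
  congr 1
  rw [← Complex.ofReal_mul, Real.mul_self_sqrt (by positivity)]
  simp

lemma inner_stdB (t t' : ZMod p) :
    ⟪stdB p t, stdB p t'⟫_ℂ = if t = t' then 1 else 0 := by
  calc ⟪stdB p t, stdB p t'⟫_ℂ
      = ∑ x : Fin p, (if (((x:ℕ):ZMod p)) = t then (if (((x:ℕ):ZMod p)) = t' then (1:ℂ) else 0) else 0) := by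
        rw [euclid_inner]
        refine Finset.sum_congr rfl fun x _ => ?_
        simp only [stdB, PiLp.toLp_apply]
        split_ifs <;> simp_all
    _ = ∑ z : ZMod p, (if z = t then (if z = t' then (1:ℂ) else 0) else 0) :=
        sum_fin_zmod p (fun z => if z = t then (if z = t' then (1:ℂ) else 0) else 0)
    _ = if t = t' then 1 else 0 := by
        rw [Finset.sum_ite_eq' Finset.univ t (fun z => if z = t' then (1:ℂ) else 0)]
        simp [eq_comm]

lemma inner_stdB_qB (t r s : ZMod p) :
    ⟪stdB p t, qB p r s⟫_ℂ = zchar p (r * t ^ 2 + s * t) * ((Real.sqrt p : ℂ))⁻¹ := by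
  calc ⟪stdB p t, qB p r s⟫_ℂ
      = ∑ x : Fin p, (if (((x:ℕ):ZMod p)) = t then
          zchar p (r * (((x:ℕ):ZMod p)) ^ 2 + s * (((x:ℕ):ZMod p))) * ((Real.sqrt p : ℂ))⁻¹ else 0) := by
        rw [euclid_inner]
        refine Finset.sum_congr rfl fun x _ => ?_
        simp only [stdB, qB, PiLp.toLp_apply]
        split_ifs <;> simp_all
    _ = ∑ z : ZMod p, (if z = t then zchar p (r * z ^ 2 + s * z) * ((Real.sqrt p : ℂ))⁻¹ else 0) :=
        sum_fin_zmod p (fun z => if z = t then zchar p (r * z ^ 2 + s * z) * ((Real.sqrt p : ℂ))⁻¹ else 0)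
    _ = zchar p (r * t ^ 2 + s * t) * ((Real.sqrt p : ℂ))⁻¹ := by
        rw [Finset.sum_ite_eq' Finset.univ t]
        simp

lemma inner_qB (r s r' s' : ZMod p) :
    ⟪qB p r s, qB p r' s'⟫_ℂ = ((p : ℂ))⁻¹ * gsum p (r' - r) (s' - s) := by
  calc ⟪qB p r s, qB p r' s'⟫_ℂ
      = ∑ x : Fin p, ((p:ℂ))⁻¹ * zchar p ((r' - r) * (((x:ℕ):ZMod p)) ^ 2 + (s' - s) * (((x:ℕ):ZMod p))) := by
        rw [euclid_inner]
        refine Finset.sum_congr rfl fun x _ => ?_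
        simp only [qB, PiLp.toLp_apply]
        rw [map_mul, conj_zchar, Complex.conj_inv, Complex.conj_ofReal]
        rw [show ∀ (a b c d : ℂ), a * b * (c * d) = (b * d) * (a * c) from fun a b c d => by ring]
        rw [sqp_sq, ← zchar_add]
        congr 2
        ring
    _ = ∑ z : ZMod p, ((p:ℂ))⁻¹ * zchar p ((r' - r) * z ^ 2 + (s' - s) * z) :=
        sum_fin_zmod p (fun z => ((p:ℂ))⁻¹ * zchar p ((r' - r) * z ^ 2 + (s' - s) * z))
    _ = ((p : ℂ))⁻¹ * gsum p (r' - r) (s' - s) := by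
        rw [← Finset.mul_sum, gsum]
end Bases

section OddMUB
open scoped InnerProductSpace
variable (p : ℕ) [Fact p.Prime]

lemma p_pos : 0 < p := (Fact.out : p.Prime).pos

lemma sqrtp_pos : 0 < Real.sqrt p := Real.sqrt_pos.mpr (by exact_mod_cast p_pos p)

lemma abs_invsqp : ‖((Real.sqrt p : ℂ))⁻¹‖ = 1 / Real.sqrt p := by
  rw [norm_inv, Complex.norm_real, Real.norm_eq_abs, _root_.abs_of_nonneg (Real.sqrt_nonneg _), one_div]

lemma stdB_orthonormal : Orthonormal ℂ (stdB p) := by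
  rw [orthonormal_iff_ite]
  intro s s'
  rw [inner_stdB]

lemma qB_orthonormal (r : ZMod p) : Orthonormal ℂ (qB p r) := by
  rw [orthonormal_iff_ite]
  intro s s'
  rw [inner_qB, sub_self, gsum_zero_left]
  rcases eq_or_ne s s' with h | h
  · rw [h, sub_self, if_pos rfl, if_pos rfl, inv_mul_cancel₀]
    exact_mod_cast (p_pos p).ne'
  · rw [if_neg (sub_ne_zero.mpr (Ne.symm h)), if_neg h, mul_zero]

lemma abs_inner_stdB_qB (t r s : ZMod p) :
    ‖⟪stdB p t, qB p r s⟫_ℂ‖ = 1 / Real.sqrt p := by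
  rw [inner_stdB_qB, norm_mul, abs_zchar, one_mul, abs_invsqp]

lemma abs_inner_qB_qB (hp2 : p ≠ 2) {r r' : ZMod p} (h : r ≠ r') (s s' : ZMod p) :
    ‖⟪qB p r s, qB p r' s'⟫_ℂ‖ = 1 / Real.sqrt p := by
  rw [inner_qB, norm_mul, abs_gsum p hp2 (sub_ne_zero.mpr (Ne.symm h)), norm_inv,
    Complex.norm_natCast]
  rw [eq_div_iff (sqrtp_pos p).ne']
  rw [show (p:ℝ)⁻¹ * Real.sqrt p * Real.sqrt p = (p:ℝ)⁻¹ * (Real.sqrt p * Real.sqrt p) by ring]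
  rw [Real.mul_self_sqrt (by positivity)]
  exact inv_mul_cancel₀ (by exact_mod_cast (p_pos p).ne')

/-- The optioned MUB family for an odd prime. -/
noncomputable def oddFam (p : ℕ) [NeZero p] : Option (ZMod p) → ZMod p → EuclideanSpace ℂ (Fin p)
  | none => stdB p
  | some r => qB p r

lemma oddFam_orthonormal (o : Option (ZMod p)) : Orthonormal ℂ (oddFam p o) := by
  cases o with
  | none => exact stdB_orthonormal p
  | some r => exact qB_orthonormal p r

lemma oddFam_mub (hp2 : p ≠ 2) (o o' : Option (ZMod p)) (h : o ≠ o') (a b : ZMod p) :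
    ‖⟪oddFam p o a, oddFam p o' b⟫_ℂ‖ = 1 / Real.sqrt p := by
  cases o with
  | none =>
    cases o' with
    | none => exact absurd rfl h
    | some r => exact abs_inner_stdB_qB p a r b
  | some r =>
    cases o' with
    | none =>
      rw [abs_inner_swap]
      exact abs_inner_stdB_qB p b r a
    | some r' =>
      exact abs_inner_qB_qB p hp2 (fun hrr => h (by rw [hrr])) a b
end OddMUB

section TwoMUB
open scoped InnerProductSpace

lemma zmod2_cases (s : ZMod 2) : s = 0 ∨ s = 1 := by revert s; decide

noncomputable def phi (r s : ZMod 2) : ℂ :=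
  (if r = 0 then 1 else Complex.I) * (if s = 0 then 1 else -1)

noncomputable def vB (r : ZMod 2) : ZMod 2 → EuclideanSpace ℂ (Fin 2) :=
  fun s => WithLp.toLp 2 (fun (x : Fin 2) => phi r s ^ (x : ℕ) * ((Real.sqrt 2 : ℂ))⁻¹)

lemma sq2_sq : ((Real.sqrt 2 : ℂ))⁻¹ * ((Real.sqrt 2 : ℂ))⁻¹ = ((2 : ℂ))⁻¹ := by
  rw [← mul_inv]
  congr 1
  rw [← Complex.ofReal_mul, Real.mul_self_sqrt (by norm_num)]
  norm_num

lemma abs_inv_sq2 : ‖((Real.sqrt 2 : ℂ))⁻¹‖ = 1 / Real.sqrt 2 := by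
  rw [norm_inv, Complex.norm_real, Real.norm_eq_abs, _root_.abs_of_nonneg (Real.sqrt_nonneg _), one_div]

lemma abs_phi (r s : ZMod 2) : ‖phi r s‖ = 1 := by
  rcases zmod2_cases r with hr | hr <;> rcases zmod2_cases s with hs | hs <;>
    simp [phi, hr, hs]

lemma inner_vB (r s r' s' : ZMod 2) :
    ⟪vB r s, vB r' s'⟫_ℂ
      = (1 + (starRingEnd ℂ) (phi r s) * phi r' s') * ((2 : ℂ))⁻¹ := by
  rw [euclid_inner, Fin.sum_univ_two]
  simp only [vB, PiLp.toLp_apply, Fin.val_zero, Fin.val_one, pow_zero, pow_one, one_mul]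
  rw [map_mul, Complex.conj_inv, Complex.conj_ofReal]
  rw [show ∀ (a b c d : ℂ), a * b * (c * d) = (a * c) * (b * d) from fun a b c d => by ring,
    sq2_sq]
  ring

lemma inner_stdB_vB (t : ZMod 2) (r s : ZMod 2) :
    ⟪stdB 2 t, vB r s⟫_ℂ = (if t = 0 then 1 else phi r s) * ((Real.sqrt 2 : ℂ))⁻¹ := by
  rw [euclid_inner, Fin.sum_univ_two]
  simp only [stdB, vB, PiLp.toLp_apply, Fin.val_zero, Fin.val_one, pow_zero, pow_one, one_mul]
  rcases zmod2_cases t with ht | ht <;> subst ht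
  · rw [if_pos (by decide), if_neg (by decide), if_pos rfl]
    simp
  · rw [if_neg (by decide), if_pos (by decide), if_neg (by decide)]
    simp

lemma vB_orthonormal (r : ZMod 2) : Orthonormal ℂ (vB r) := by
  rw [orthonormal_iff_ite]
  intro s s'
  rw [inner_vB]
  rcases zmod2_cases r with hr | hr <;> rcases zmod2_cases s with hs | hs <;>
    rcases zmod2_cases s' with hs' | hs' <;>
      subst hr hs hs' <;> simp [phi] <;> norm_num
end TwoMUB

section TwoFam
open scoped InnerProductSpace

lemma abs_one_add_I : ‖1 + Complex.I‖ = Real.sqrt 2 := by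
  rw [Complex.norm_def, Complex.normSq_apply]
  simp
  norm_num

lemma abs_one_sub_I : ‖1 + -Complex.I‖ = Real.sqrt 2 := by
  rw [Complex.norm_def, Complex.normSq_apply]
  simp
  norm_num

lemma habs2 {c : ℂ} (hc : c = Complex.I ∨ c = -Complex.I) :
    ‖1 + c‖ * ((2 : ℝ))⁻¹ = 1 / Real.sqrt 2 := by
  have h2 : Real.sqrt 2 * Real.sqrt 2 = 2 := Real.mul_self_sqrt (by norm_num)
  have hs : Real.sqrt 2 ≠ 0 := by positivity
  rcases hc with h | h <;> subst h
  · rw [abs_one_add_I]; field_simp; rw [sq, h2]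
  · rw [abs_one_sub_I]; field_simp; rw [sq, h2]

lemma abs_inner_stdB_vB (t r s : ZMod 2) :
    ‖⟪stdB 2 t, vB r s⟫_ℂ‖ = 1 / Real.sqrt 2 := by
  rw [inner_stdB_vB, norm_mul, abs_inv_sq2]
  split_ifs
  · simp
  · rw [abs_phi, one_mul]

lemma abs_inner_vB_vB {r r' : ZMod 2} (h : r ≠ r') (s s' : ZMod 2) :
    ‖⟪vB r s, vB r' s'⟫_ℂ‖ = 1 / Real.sqrt 2 := by
  rw [inner_vB, norm_mul, norm_inv, Complex.norm_two]
  have hc : (starRingEnd ℂ) (phi r s) * phi r' s' = Complex.I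
      ∨ (starRingEnd ℂ) (phi r s) * phi r' s' = -Complex.I := by
    rcases zmod2_cases r with hr | hr <;> rcases zmod2_cases r' with hr' | hr' <;>
      rcases zmod2_cases s with hs | hs <;> rcases zmod2_cases s' with hs' | hs' <;>
      subst hr hr' hs hs' <;>
      first
        | exact absurd rfl h
        | (left; simp [phi, Complex.conj_I]; done)
        | (right; simp [phi, Complex.conj_I]; done)
  rcases hc with h1 | h1 <;> rw [h1]
  · exact habs2 (Or.inl rfl)
  · exact habs2 (Or.inr rfl)

noncomputable def twoFam : Option (ZMod 2) → ZMod 2 → EuclideanSpace ℂ (Fin 2)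
  | none => stdB 2
  | some r => vB r

lemma twoFam_orthonormal (o : Option (ZMod 2)) : Orthonormal ℂ (twoFam o) := by
  cases o with
  | none => exact stdB_orthonormal 2
  | some r => exact vB_orthonormal r

lemma twoFam_mub (o o' : Option (ZMod 2)) (h : o ≠ o') (a b : ZMod 2) :
    ‖⟪twoFam o a, twoFam o' b⟫_ℂ‖ = 1 / Real.sqrt 2 := by
  cases o with
  | none =>
    cases o' with
    | none => exact absurd rfl h
    | some r => exact abs_inner_stdB_vB a r b
  | some r =>
    cases o' with
    | none => rw [abs_inner_swap]; exact abs_inner_stdB_vB b r a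
    | some r' => exact abs_inner_vB_vB (fun hrr => h (by rw [hrr])) a b
end TwoFam

section MUBExists
open scoped InnerProductSpace

lemma MUB_exists (p : ℕ) (hp : p.Prime) :
    ∃ M : Fin (p + 1) → ZMod p → EuclideanSpace ℂ (Fin p),
      (∀ i, Orthonormal ℂ (M i)) ∧
      ∀ i j, i ≠ j → ∀ a b, ‖⟪M i a, M j b⟫_ℂ‖ = 1 / Real.sqrt p := by
  haveI : Fact p.Prime := ⟨hp⟩
  haveI : NeZero p := ⟨hp.ne_zero⟩
  obtain ⟨Mo, hMo1, hMo2⟩ :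
      ∃ Mo : Option (ZMod p) → ZMod p → EuclideanSpace ℂ (Fin p),
        (∀ o, Orthonormal ℂ (Mo o)) ∧
        ∀ o o', o ≠ o' → ∀ a b, ‖⟪Mo o a, Mo o' b⟫_ℂ‖ = 1 / Real.sqrt p := by
    by_cases hp2 : p = 2
    · subst hp2
      exact ⟨twoFam, twoFam_orthonormal, fun o o' h a b => by
        rw [twoFam_mub o o' h a b]; norm_num⟩
    · exact ⟨oddFam p, oddFam_orthonormal p, fun o o' h a b => oddFam_mub p hp2 o o' h a b⟩
  let e : Fin (p + 1) ≃ Option (ZMod p) :=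
    (finSuccEquiv p).trans (Equiv.optionCongr (zmodFinEquiv p))
  refine ⟨fun i => Mo (e i), fun i => hMo1 (e i), fun i j hij a b => ?_⟩
  exact hMo2 (e i) (e j) (fun hee => hij (e.injective hee)) a b
end MUBExists

section Relations
open scoped InnerProductSpace

variable {k : ℕ} [NeZero k]

noncomputable def onb {k : ℕ} [NeZero k] (F : ZMod k → EuclideanSpace ℂ (Fin k))
    (hF : Orthonormal ℂ F) : OrthonormalBasis (ZMod k) ℂ (EuclideanSpace ℂ (Fin k)) :=
  OrthonormalBasis.mk hF (by
    have hcard : Fintype.card (ZMod k) = Module.finrank ℂ (EuclideanSpace ℂ (Fin k)) := by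
      rw [ZMod.card, finrank_euclideanSpace_fin]
    have hb := (basisOfLinearIndependentOfCardEqFinrank hF.linearIndependent hcard).span_eq
    rw [coe_basisOfLinearIndependentOfCardEqFinrank] at hb
    exact hb.ge)

lemma onb_coe {k : ℕ} [NeZero k] (F : ZMod k → EuclideanSpace ℂ (Fin k))
    (hF : Orthonormal ℂ F) : ⇑(onb F hF) = F :=
  OrthonormalBasis.coe_mk hF _

lemma parseval (F : ZMod k → EuclideanSpace ℂ (Fin k)) (hF : Orthonormal ℂ F)
    (v : EuclideanSpace ℂ (Fin k)) (hv : ⟪v, v⟫_ℂ = 1) :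
    ∑ b : ZMod k, (‖⟪F b, v⟫_ℂ‖) ^ 2 = 1 := by
  have h := (onb F hF).sum_inner_mul_inner v v
  rw [hv] at h
  have h2 : ∀ b : ZMod k, ⟪v, (onb F hF) b⟫_ℂ * ⟪(onb F hF) b, v⟫_ℂ
      = ((‖⟪F b, v⟫_ℂ‖ ^ 2 : ℝ) : ℂ) := by
    intro b
    rw [onb_coe]
    rw [(inner_conj_symm v (F b)).symm, mul_comm, Complex.mul_conj]
    norm_cast
    rw [Complex.sq_norm]
  rw [Finset.sum_congr rfl fun b _ => h2 b] at h
  exact_mod_cast (by exact_mod_cast h : ((∑ b : ZMod k, ‖⟪F b, v⟫_ℂ‖ ^ 2 : ℝ) : ℂ) = 1)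

/-- `F` and `G` agree up to phases. -/
def RSame {k : ℕ} (F G : ZMod k → EuclideanSpace ℂ (Fin k)) : Prop :=
  ∀ a b, ‖⟪F a, G b⟫_ℂ‖ = if a = b then 1 else 0

/-- `F` and `G` are mutually unbiased. -/
def MUB (k : ℕ) (F G : ZMod k → EuclideanSpace ℂ (Fin k)) : Prop :=
  ∀ a b, ‖⟪F a, G b⟫_ℂ‖ = 1 / Real.sqrt k

lemma RSame_refl {F : ZMod k → EuclideanSpace ℂ (Fin k)} (hF : Orthonormal ℂ F) :
    RSame F F := by
  intro a b
  rw [orthonormal_iff_ite.mp hF a b]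
  split_ifs <;> simp

lemma RSame_symm {F G : ZMod k → EuclideanSpace ℂ (Fin k)} (h : RSame F G) : RSame G F := by
  intro a b
  rw [abs_inner_swap, h b a]
  simp [eq_comm]

lemma RSame_trans {F G H : ZMod k → EuclideanSpace ℂ (Fin k)} (hG : Orthonormal ℂ G)
    (h1 : RSame F G) (h2 : RSame G H) : RSame F H := by
  intro a b
  have hexp := (onb G hG).sum_inner_mul_inner (F a) (H b)
  rw [onb_coe] at hexp
  have hz : ∀ c : ZMod k, c ≠ a → ⟪F a, G c⟫_ℂ * ⟪G c, H b⟫_ℂ = 0 := by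
    intro c hc
    have : ‖⟪F a, G c⟫_ℂ‖ = 0 := by rw [h1 a c, if_neg (fun h => hc h.symm)]
    rw [norm_eq_zero] at this
    rw [this, zero_mul]
  rw [Finset.sum_eq_single_of_mem a (Finset.mem_univ a) (fun c _ hc => hz c hc)] at hexp
  rw [← hexp, norm_mul]
  have ha : ‖⟪F a, G a⟫_ℂ‖ = 1 := by rw [h1 a a, if_pos rfl]
  rw [ha, one_mul, h2 a b]

lemma RSame_not_MUB {F G : ZMod k → EuclideanSpace ℂ (Fin k)} (hk : 1 < k)
    (h1 : RSame F G) (h2 : MUB k F G) : False := by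
  haveI : Fact (1 < k) := ⟨hk⟩
  have h01 : (0 : ZMod k) ≠ 1 := zero_ne_one
  have e1 := h1 0 1
  rw [if_neg h01, h2 0 1] at e1
  have hs : Real.sqrt k > 0 := Real.sqrt_pos.mpr (by exact_mod_cast Nat.zero_lt_of_lt hk)
  have hpos : 0 < 1 / Real.sqrt k := by rw [one_div]; exact inv_pos.mpr hs
  exact hpos.ne' e1

/-- if all the overlaps of an orthonormal family with a unit vector are equal,
they equal `1/√k`. -/
lemma const_overlap (F : ZMod k → EuclideanSpace ℂ (Fin k)) (hF : Orthonormal ℂ F)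
    (v : EuclideanSpace ℂ (Fin k)) (hv : ⟪v, v⟫_ℂ = 1) (x : ℝ)
    (hx : ∀ b, ‖⟪F b, v⟫_ℂ‖ = x) : x = 1 / Real.sqrt k := by
  have hP := parseval F hF v hv
  rw [Finset.sum_congr rfl fun b _ => by rw [hx b]] at hP
  rw [Finset.sum_const, Finset.card_univ, ZMod.card, nsmul_eq_mul] at hP
  have hx0 : 0 ≤ x := (hx 0) ▸ norm_nonneg _
  have hk0 : (0:ℝ) < k := by
    have := (NeZero.ne k); positivity
  have hxsq : x ^ 2 = 1 / k := by field_simp at hP ⊢; linarith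
  rw [← Real.sqrt_sq hx0, hxsq]
  rw [one_div, Real.sqrt_inv, one_div]
end Relations

open scoped InnerProductSpace

/-- First CRT label of `m ∈ Z(d₁d₂)`:  `m̄₁ = t₁·(m mod d₁)`. -/
def bar1 (d1 d2 : ℕ) (t1 : ZMod d1) (m : ZMod (d1 * d2)) : ZMod d1 :=
  t1 * ZMod.castHom (dvd_mul_right d1 d2) (ZMod d1) m

/-- Second CRT label of `m ∈ Z(d₁d₂)`:  `m̄₂ = t₂·(m mod d₂)`. -/
def bar2 (d1 d2 : ℕ) (t2 : ZMod d2) (m : ZMod (d1 * d2)) : ZMod d2 :=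
  t2 * ZMod.castHom (dvd_mul_left d2 d1) (ZMod d2) m

/-- Two orthonormal bases `X, Y` of `C^{d₁} ⊗ C^{d₂} = C^{d₁·d₂}`, labelled by
`Z(d₁d₂)`, form a *weak mutually unbiased pair* if their overlaps
`|⟨X;n|Y;m⟩|` are either (a) `d₁^{-1/2}` when `n ≡ m (mod d₂)` and `0` otherwise,
(b) `d₂^{-1/2}` when `n ≡ m (mod d₁)` and `0` otherwise, or (c) `(d₁d₂)^{-1/2}`
for all `n, m`. -/
def IsWMUBPair (d1 d2 : ℕ)
    (X Y : ZMod (d1 * d2) → EuclideanSpace ℂ (Fin d1 × Fin d2)) : Prop :=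
  (∀ n m : ZMod (d1 * d2),
      (ZMod.castHom (dvd_mul_left d2 d1) (ZMod d2) n
          = ZMod.castHom (dvd_mul_left d2 d1) (ZMod d2) m →
        ‖⟪X n, Y m⟫_ℂ‖ = 1 / Real.sqrt d1) ∧
      (ZMod.castHom (dvd_mul_left d2 d1) (ZMod d2) n
          ≠ ZMod.castHom (dvd_mul_left d2 d1) (ZMod d2) m →
        ‖⟪X n, Y m⟫_ℂ‖ = 0)) ∨
  (∀ n m : ZMod (d1 * d2),
      (ZMod.castHom (dvd_mul_right d1 d2) (ZMod d1) n
          = ZMod.castHom (dvd_mul_right d1 d2) (ZMod d1) m →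
        ‖⟪X n, Y m⟫_ℂ‖ = 1 / Real.sqrt d2) ∧
      (ZMod.castHom (dvd_mul_right d1 d2) (ZMod d1) n
          ≠ ZMod.castHom (dvd_mul_right d1 d2) (ZMod d1) m →
        ‖⟪X n, Y m⟫_ℂ‖ = 0)) ∨
  (∀ n m : ZMod (d1 * d2),
      ‖⟪X n, Y m⟫_ℂ‖ = 1 / Real.sqrt (d1 * d2))


section Factor
open scoped InnerProductSpace
variable (d1 d2 : ℕ)

lemma inner_factor
    (A A' : ZMod d1 → EuclideanSpace ℂ (Fin d1))
    (C C' : ZMod d2 → EuclideanSpace ℂ (Fin d2))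
    (t1 : ZMod d1) (t2 : ZMod d2)
    (B B' : ZMod (d1 * d2) → EuclideanSpace ℂ (Fin d1 × Fin d2))
    (hB : ∀ (m : ZMod (d1 * d2)) (a : Fin d1) (b : Fin d2),
      B m (a, b) = A (bar1 d1 d2 t1 m) a * C (bar2 d1 d2 t2 m) b)
    (hB' : ∀ (m : ZMod (d1 * d2)) (a : Fin d1) (b : Fin d2),
      B' m (a, b) = A' (bar1 d1 d2 t1 m) a * C' (bar2 d1 d2 t2 m) b)
    (n m : ZMod (d1 * d2)) :
    ⟪B n, B' m⟫_ℂ = ⟪A (bar1 d1 d2 t1 n), A' (bar1 d1 d2 t1 m)⟫_ℂ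
      * ⟪C (bar2 d1 d2 t2 n), C' (bar2 d1 d2 t2 m)⟫_ℂ := by
  rw [euclid_inner, euclid_inner, euclid_inner]
  rw [show (∑ x : Fin d1 × Fin d2, (starRingEnd ℂ) (B n x) * B' m x)
      = ∑ x : Fin d1 × Fin d2,
          ((starRingEnd ℂ) (A (bar1 d1 d2 t1 n) x.1) * A' (bar1 d1 d2 t1 m) x.1)
        * ((starRingEnd ℂ) (C (bar2 d1 d2 t2 n) x.2) * C' (bar2 d1 d2 t2 m) x.2)
    from Finset.sum_congr rfl fun x _ => by
      rw [show x = (x.1, x.2) from rfl, hB, hB', map_mul]; ring]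
  rw [Fintype.sum_prod_type, Finset.sum_mul_sum]

end Factor

section CRT
variable (d1 d2 : ℕ) [Fact d1.Prime] [Fact d2.Prime]

lemma cast_surj (hne : d1 ≠ d2) (u : ZMod d1) (v : ZMod d2) :
    ∃ n : ZMod (d1 * d2),
      ZMod.castHom (dvd_mul_right d1 d2) (ZMod d1) n = u ∧
      ZMod.castHom (dvd_mul_left d2 d1) (ZMod d2) n = v := by
  have hco : Nat.Coprime d1 d2 := (Nat.coprime_primes Fact.out Fact.out).mpr hne
  let χ := ZMod.chineseRemainder hco
  have hext : (χ : ZMod (d1*d2) →+* ZMod d1 × ZMod d2)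
      = (ZMod.castHom (dvd_mul_right d1 d2) (ZMod d1)).prod
        (ZMod.castHom (dvd_mul_left d2 d1) (ZMod d2)) := RingHom.ext_zmod _ _
  refine ⟨χ.symm (u, v), ?_, ?_⟩
  · have h := χ.apply_symm_apply (u, v)
    have h2 := RingHom.congr_fun hext (χ.symm (u, v))
    rw [RingHom.prod_apply] at h2
    have : ((ZMod.castHom (dvd_mul_right d1 d2) (ZMod d1)) (χ.symm (u, v)),
        (ZMod.castHom (dvd_mul_left d2 d1) (ZMod d2)) (χ.symm (u, v))) = (u, v) := by
      rw [← h2]; exact h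
    exact (Prod.mk.injEq _ _ _ _).mp this |>.1
  · have h := χ.apply_symm_apply (u, v)
    have h2 := RingHom.congr_fun hext (χ.symm (u, v))
    rw [RingHom.prod_apply] at h2
    have : ((ZMod.castHom (dvd_mul_right d1 d2) (ZMod d1)) (χ.symm (u, v)),
        (ZMod.castHom (dvd_mul_left d2 d1) (ZMod d2)) (χ.symm (u, v))) = (u, v) := by
      rw [← h2]; exact h
    exact (Prod.mk.injEq _ _ _ _).mp this |>.2

lemma t_ne_zero {k l : ℕ} [Fact k.Prime] {t : ZMod k} (ht : t * (l : ZMod k) = 1) :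
    t ≠ 0 := by
  intro h
  rw [h, zero_mul] at ht
  exact zero_ne_one ht

lemma bar_surj (hne : d1 ≠ d2) (t1 : ZMod d1) (t2 : ZMod d2)
    (ht1 : t1 * (d2 : ZMod d1) = 1) (ht2 : t2 * (d1 : ZMod d2) = 1)
    (a : ZMod d1) (c : ZMod d2) :
    ∃ n : ZMod (d1 * d2), bar1 d1 d2 t1 n = a ∧ bar2 d1 d2 t2 n = c := by
  obtain ⟨n, h1, h2⟩ := cast_surj d1 d2 hne (t1⁻¹ * a) (t2⁻¹ * c)
  refine ⟨n, ?_, ?_⟩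
  · rw [bar1, h1, ← mul_assoc, mul_inv_cancel₀ (t_ne_zero ht1), one_mul]
  · rw [bar2, h2, ← mul_assoc, mul_inv_cancel₀ (t_ne_zero ht2), one_mul]

lemma bar2_eq_iff (t2 : ZMod d2) (ht2 : t2 * (d1 : ZMod d2) = 1) (n m : ZMod (d1 * d2)) :
    bar2 d1 d2 t2 n = bar2 d1 d2 t2 m ↔
      ZMod.castHom (dvd_mul_left d2 d1) (ZMod d2) n
        = ZMod.castHom (dvd_mul_left d2 d1) (ZMod d2) m := by
  constructor
  · exact fun h => mul_left_cancel₀ (t_ne_zero ht2) h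
  · exact fun h => by rw [bar2, bar2, h]

lemma bar1_eq_iff (t1 : ZMod d1) (ht1 : t1 * (d2 : ZMod d1) = 1) (n m : ZMod (d1 * d2)) :
    bar1 d1 d2 t1 n = bar1 d1 d2 t1 m ↔
      ZMod.castHom (dvd_mul_right d1 d2) (ZMod d1) n
        = ZMod.castHom (dvd_mul_right d1 d2) (ZMod d1) m := by
  constructor
  · exact fun h => mul_left_cancel₀ (t_ne_zero ht1) h
  · exact fun h => by rw [bar1, bar1, h]
end CRT

section Dich
open scoped InnerProductSpace

lemma inner_self_one {k : ℕ} {F : ZMod k → EuclideanSpace ℂ (Fin k)}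
    (hF : Orthonormal ℂ F) (a : ZMod k) : ⟪F a, F a⟫_ℂ = 1 := by
  rw [orthonormal_iff_ite.mp hF a a, if_pos rfl]

lemma const_val {k : ℕ} [Fact k.Prime] (X X' : ZMod k → EuclideanSpace ℂ (Fin k))
    (hX : Orthonormal ℂ X) (hX' : Orthonormal ℂ X') {q : ℝ}
    (hq : ∀ a b, ‖⟪X a, X' b⟫_ℂ‖ = q) : q = 1 / Real.sqrt k := by
  haveI : NeZero k := ⟨(Fact.out : k.Prime).ne_zero⟩
  exact const_overlap X' hX' (X 0) (inner_self_one hX 0) q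
    (fun b => by rw [abs_inner_swap]; exact hq 0 b)

lemma sqrtK_pos (k : ℕ) [Fact k.Prime] : 0 < 1 / Real.sqrt k := by
  have : (0:ℝ) < k := by exact_mod_cast (Fact.out : k.Prime).pos
  positivity

/-- diag value 1 via Parseval when off-diagonals vanish -/
lemma diag_one {k : ℕ} [Fact k.Prime] (X X' : ZMod k → EuclideanSpace ℂ (Fin k))
    (hX : Orthonormal ℂ X) (hX' : Orthonormal ℂ X')
    (hoff : ∀ a b, a ≠ b → ‖⟪X a, X' b⟫_ℂ‖ = 0) (a : ZMod k) :
    ‖⟪X a, X' a⟫_ℂ‖ = 1 := by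
  haveI : NeZero k := ⟨(Fact.out : k.Prime).ne_zero⟩
  have hP := parseval X' hX' (X a) (inner_self_one hX a)
  rw [Finset.sum_eq_single_of_mem a (Finset.mem_univ a)
    (fun b _ hb => by
      rw [abs_inner_swap, hoff a b (fun h => hb h.symm)]
      norm_num)] at hP
  rw [abs_inner_swap]
  have hnn : 0 ≤ ‖⟪X' a, X a⟫_ℂ‖ := norm_nonneg _
  nlinarith [hP]

lemma wmub_dichotomy (d1 d2 : ℕ) [Fact d1.Prime] [Fact d2.Prime] (hne : d1 ≠ d2)
    (t1 : ZMod d1) (t2 : ZMod d2)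
    (ht1 : t1 * (d2 : ZMod d1) = 1) (ht2 : t2 * (d1 : ZMod d2) = 1)
    (A A' : ZMod d1 → EuclideanSpace ℂ (Fin d1))
    (C C' : ZMod d2 → EuclideanSpace ℂ (Fin d2))
    (hA : Orthonormal ℂ A) (hA' : Orthonormal ℂ A')
    (hC : Orthonormal ℂ C) (hC' : Orthonormal ℂ C')
    (B B' : ZMod (d1 * d2) → EuclideanSpace ℂ (Fin d1 × Fin d2))
    (hB : ∀ (m : ZMod (d1 * d2)) (a : Fin d1) (b : Fin d2),
      B m (a, b) = A (bar1 d1 d2 t1 m) a * C (bar2 d1 d2 t2 m) b)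
    (hB' : ∀ (m : ZMod (d1 * d2)) (a : Fin d1) (b : Fin d2),
      B' m (a, b) = A' (bar1 d1 d2 t1 m) a * C' (bar2 d1 d2 t2 m) b)
    (hw : IsWMUBPair d1 d2 B B') :
    (MUB d1 A A' ∧ RSame C C') ∨ (RSame A A' ∧ MUB d2 C C')
      ∨ (MUB d1 A A' ∧ MUB d2 C C') := by
  have hK1 : (0:ℝ) < 1 / Real.sqrt d1 := sqrtK_pos d1
  have hK2 : (0:ℝ) < 1 / Real.sqrt d2 := sqrtK_pos d2
  rcases hw with hw | hw | hw
  · -- case (a): A's are MUB, C's same up to phases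
    left
    have key : ∀ (a b : ZMod d1) (c : ZMod d2),
        ‖⟪A a, A' b⟫_ℂ‖ * ‖⟪C c, C' c⟫_ℂ‖ = 1 / Real.sqrt d1 := by
      intro a b c
      obtain ⟨n, hn1, hn2⟩ := bar_surj d1 d2 hne t1 t2 ht1 ht2 a c
      obtain ⟨m, hm1, hm2⟩ := bar_surj d1 d2 hne t1 t2 ht1 ht2 b c
      have hc2 := (bar2_eq_iff d1 d2 t2 ht2 n m).mp (by rw [hn2, hm2])
      have h := (hw n m).1 hc2
      rw [inner_factor d1 d2 A A' C C' t1 t2 B B' hB hB' n m, norm_mul,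
        hn1, hn2, hm1, hm2] at h
      exact h
    have key0 : ∀ (a b : ZMod d1) (c c' : ZMod d2), c ≠ c' →
        ‖⟪A a, A' b⟫_ℂ‖ * ‖⟪C c, C' c'⟫_ℂ‖ = 0 := by
      intro a b c c' hcc
      obtain ⟨n, hn1, hn2⟩ := bar_surj d1 d2 hne t1 t2 ht1 ht2 a c
      obtain ⟨m, hm1, hm2⟩ := bar_surj d1 d2 hne t1 t2 ht1 ht2 b c'
      have hc2 : ZMod.castHom (dvd_mul_left d2 d1) (ZMod d2) n
          ≠ ZMod.castHom (dvd_mul_left d2 d1) (ZMod d2) m := by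
        intro h
        exact hcc (by rw [← hn2, ← hm2, (bar2_eq_iff d1 d2 t2 ht2 n m).mpr h])
      have h := (hw n m).2 hc2
      rw [inner_factor d1 d2 A A' C C' t1 t2 B B' hB hB' n m, norm_mul,
        hn1, hn2, hm1, hm2] at h
      exact h
    have hy0 : ‖⟪C 0, C' 0⟫_ℂ‖ ≠ 0 := by
      intro h
      have := key 0 0 0
      rw [h, mul_zero] at this
      exact hK1.ne this
    have hq : ∀ a b, ‖⟪A a, A' b⟫_ℂ‖
        = (1 / Real.sqrt d1) / ‖⟪C 0, C' 0⟫_ℂ‖ := by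
      intro a b
      rw [eq_div_iff hy0]
      exact key a b 0
    have hqv := const_val A A' hA hA' hq
    have hMA : MUB d1 A A' := fun a b => by rw [hq a b, hqv]
    refine ⟨hMA, fun c c' => ?_⟩
    rcases eq_or_ne c c' with h | h
    · subst h
      rw [if_pos rfl]
      have := key 0 0 c
      rw [hMA 0 0] at this
      have h2 := mul_left_cancel₀ hK1.ne' (this.trans (mul_one (1 / Real.sqrt d1)).symm)
      exact h2
    · rw [if_neg h]
      have := key0 0 0 c c' h
      rw [hMA 0 0] at this
      rcases mul_eq_zero.mp this with h2 | h2
      · exact absurd h2 hK1.ne'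
      · exact h2
  · -- case (b): A's same up to phases, C's MUB
    right; left
    have key : ∀ (a : ZMod d1) (c c' : ZMod d2),
        ‖⟪A a, A' a⟫_ℂ‖ * ‖⟪C c, C' c'⟫_ℂ‖ = 1 / Real.sqrt d2 := by
      intro a c c'
      obtain ⟨n, hn1, hn2⟩ := bar_surj d1 d2 hne t1 t2 ht1 ht2 a c
      obtain ⟨m, hm1, hm2⟩ := bar_surj d1 d2 hne t1 t2 ht1 ht2 a c'
      have hc1 := (bar1_eq_iff d1 d2 t1 ht1 n m).mp (by rw [hn1, hm1])
      have h := (hw n m).1 hc1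
      rw [inner_factor d1 d2 A A' C C' t1 t2 B B' hB hB' n m, norm_mul,
        hn1, hn2, hm1, hm2] at h
      exact h
    have key0 : ∀ (a b : ZMod d1) (c c' : ZMod d2), a ≠ b →
        ‖⟪A a, A' b⟫_ℂ‖ * ‖⟪C c, C' c'⟫_ℂ‖ = 0 := by
      intro a b c c' hab
      obtain ⟨n, hn1, hn2⟩ := bar_surj d1 d2 hne t1 t2 ht1 ht2 a c
      obtain ⟨m, hm1, hm2⟩ := bar_surj d1 d2 hne t1 t2 ht1 ht2 b c'
      have hc1 : ZMod.castHom (dvd_mul_right d1 d2) (ZMod d1) n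
          ≠ ZMod.castHom (dvd_mul_right d1 d2) (ZMod d1) m := by
        intro h
        exact hab (by rw [← hn1, ← hm1, (bar1_eq_iff d1 d2 t1 ht1 n m).mpr h])
      have h := (hw n m).2 hc1
      rw [inner_factor d1 d2 A A' C C' t1 t2 B B' hB hB' n m, norm_mul,
        hn1, hn2, hm1, hm2] at h
      exact h
    have hx0 : ‖⟪A 0, A' 0⟫_ℂ‖ ≠ 0 := by
      intro h
      have := key 0 0 0
      rw [h, zero_mul] at this
      exact hK2.ne this
    have hoff : ∀ a b, a ≠ b → ‖⟪A a, A' b⟫_ℂ‖ = 0 := by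
      intro a b hab
      have := key0 a b 0 0 hab
      rcases mul_eq_zero.mp this with h2 | h2
      · exact h2
      · -- abs ⟪C 0, C' 0⟫ = 0 contradicts key
        exfalso
        have hk := key 0 0 0
        rw [h2, mul_zero] at hk
        exact hK2.ne hk
    have hdiag := diag_one A A' hA hA' hoff
    have hRA : RSame A A' := by
      intro a b
      rcases eq_or_ne a b with h | h
      · subst h; rw [if_pos rfl]; exact hdiag a
      · rw [if_neg h]; exact hoff a b h
    refine ⟨hRA, fun c c' => ?_⟩
    have := key 0 c c'
    rw [hdiag 0, one_mul] at this
    exact this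
  · -- case (c): both MUB
    right; right
    have hd12 : (0:ℝ) < 1 / Real.sqrt (d1 * d2) := by
      have h1 : (0:ℝ) < d1 * d2 := by
        have := (Fact.out : d1.Prime).pos
        have := (Fact.out : d2.Prime).pos
        positivity
      positivity
    have key : ∀ (a b : ZMod d1) (c c' : ZMod d2),
        ‖⟪A a, A' b⟫_ℂ‖ * ‖⟪C c, C' c'⟫_ℂ‖
          = 1 / Real.sqrt (d1 * d2) := by
      intro a b c c'
      obtain ⟨n, hn1, hn2⟩ := bar_surj d1 d2 hne t1 t2 ht1 ht2 a c
      obtain ⟨m, hm1, hm2⟩ := bar_surj d1 d2 hne t1 t2 ht1 ht2 b c'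
      have h := hw n m
      rw [inner_factor d1 d2 A A' C C' t1 t2 B B' hB hB' n m, norm_mul,
        hn1, hn2, hm1, hm2] at h
      exact h
    have hy0 : ‖⟪C 0, C' 0⟫_ℂ‖ ≠ 0 := by
      intro h
      have := key 0 0 0 0
      rw [h, mul_zero] at this
      exact hd12.ne this
    have hq : ∀ a b, ‖⟪A a, A' b⟫_ℂ‖
        = (1 / Real.sqrt (d1 * d2)) / ‖⟪C 0, C' 0⟫_ℂ‖ := by
      intro a b
      rw [eq_div_iff hy0]
      exact key a b 0 0
    have hMA : MUB d1 A A' := fun a b => by rw [hq a b, const_val A A' hA hA' hq]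
    have hx0 : ‖⟪A 0, A' 0⟫_ℂ‖ ≠ 0 := by
      rw [hMA 0 0]; exact hK1.ne'
    have hq' : ∀ c c', ‖⟪C c, C' c'⟫_ℂ‖
        = (1 / Real.sqrt (d1 * d2)) / ‖⟪A 0, A' 0⟫_ℂ‖ := by
      intro c c'
      rw [eq_div_iff hx0]
      rw [mul_comm]
      exact key 0 0 c c'
    have hMC : MUB d2 C C' := fun c c' => by rw [hq' c c', const_val C C' hC hC' hq']
    exact ⟨hMA, hMC⟩
end Dich

section Count
open scoped InnerProductSpace

def famSetoid {ι : Type} {k : ℕ} [NeZero k] (F : ι → ZMod k → EuclideanSpace ℂ (Fin k))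
    (hF : ∀ i, Orthonormal ℂ (F i)) : Setoid ι :=
  ⟨fun i j => RSame (F i) (F j),
   ⟨fun i => RSame_refl (hF i), fun h => RSame_symm h,
    fun {i j l} h1 h2 => RSame_trans (hF j) h1 h2⟩⟩

lemma famSetoid_card {ι : Type} [Finite ι] {k : ℕ} [Fact k.Prime] [NeZero k]
    (F : ι → ZMod k → EuclideanSpace ℂ (Fin k)) (hF : ∀ i, Orthonormal ℂ (F i))
    (hdich : ∀ i j, i ≠ j → RSame (F i) (F j) ∨ MUB k (F i) (F j))
    (hmax : ∀ (κ : Type) (G : κ → ZMod k → EuclideanSpace ℂ (Fin k)),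
      (∀ i, Orthonormal ℂ (G i)) →
      (∀ i j, i ≠ j → ∀ a b, ‖⟪G i a, G j b⟫_ℂ‖ = 1 / Real.sqrt k) →
      Nat.card κ ≤ k + 1) :
    Nat.card (Quotient (famSetoid F hF)) ≤ k + 1 := by
  apply hmax (Quotient (famSetoid F hF)) (fun q => F q.out) (fun q => hF _)
  intro q q' hqq a b
  have hout : q.out ≠ q'.out := fun h => hqq (by rw [← q.out_eq, ← q'.out_eq, h])
  rcases hdich _ _ hout with h | h
  · refine absurd ?_ hqq
    have hs : Quotient.mk (famSetoid F hF) q.out = Quotient.mk (famSetoid F hF) q'.out :=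
      Quotient.sound h
    rw [q.out_eq, q'.out_eq] at hs
    exact hs
  · exact h a b
end Count

section Main
open scoped InnerProductSpace

lemma inv_sqrt_ne_one {x : ℝ} (hx : 1 < x) : 1 / Real.sqrt x ≠ 1 := by
  intro h
  rw [one_div, inv_eq_one] at h
  have := Real.sqrt_eq_one.mp h
  linarith

/-- Let `d = d₁d₂` with `d₁, d₂` distinct primes.  Given that `C^{dᵢ}` admits at most
`dᵢ + 1` pairwise mutually unbiased bases, the maximum number of weak mutually unbiased
bases in `C^d` — each such basis being a tensor product of a mutually unbiased basis of
`C^{d₁}` with one of `C^{d₂}` (under the CRT labelling) — is `ψ(d) = (d₁+1)(d₂+1)`: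
no family of pairwise weakly mutually unbiased such bases has more than `ψ(d)` members,
and there exists such a family with exactly `ψ(d)` members. -/
theorem max_number_of_wmub (d1 d2 : ℕ)
    (h1 : d1.Prime) (h2 : d2.Prime) (hne : d1 ≠ d2)
    (t1 : ZMod d1) (t2 : ZMod d2)
    (ht1 : t1 * (d2 : ZMod d1) = 1) (ht2 : t2 * (d1 : ZMod d2) = 1)
    (hmax1 : ∀ (κ : Type) (F : κ → ZMod d1 → EuclideanSpace ℂ (Fin d1)),
      (∀ i, Orthonormal ℂ (F i)) →
      (∀ i j, i ≠ j → ∀ a b : ZMod d1,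
        ‖⟪F i a, F j b⟫_ℂ‖ = 1 / Real.sqrt d1) →
      Nat.card κ ≤ d1 + 1)
    (hmax2 : ∀ (κ : Type) (F : κ → ZMod d2 → EuclideanSpace ℂ (Fin d2)),
      (∀ i, Orthonormal ℂ (F i)) →
      (∀ i j, i ≠ j → ∀ a b : ZMod d2,
        ‖⟪F i a, F j b⟫_ℂ‖ = 1 / Real.sqrt d2) →
      Nat.card κ ≤ d2 + 1) :
    (∀ (ι : Type) [Finite ι]
      (A : ι → ZMod d1 → EuclideanSpace ℂ (Fin d1))
      (C : ι → ZMod d2 → EuclideanSpace ℂ (Fin d2))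
      (B : ι → ZMod (d1 * d2) → EuclideanSpace ℂ (Fin d1 × Fin d2)),
      (∀ i, Orthonormal ℂ (A i)) → (∀ i, Orthonormal ℂ (C i)) →
      (∀ i (m : ZMod (d1 * d2)) (a : Fin d1) (b : Fin d2),
        B i m (a, b) = A i (bar1 d1 d2 t1 m) a * C i (bar2 d1 d2 t2 m) b) →
      (∀ i j, i ≠ j → B i ≠ B j) →
      (∀ i j, i ≠ j → IsWMUBPair d1 d2 (B i) (B j)) →
      Nat.card ι ≤ (d1 + 1) * (d2 + 1)) ∧
    (∃ (A : Fin ((d1 + 1) * (d2 + 1)) → ZMod d1 → EuclideanSpace ℂ (Fin d1))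
       (C : Fin ((d1 + 1) * (d2 + 1)) → ZMod d2 → EuclideanSpace ℂ (Fin d2))
       (B : Fin ((d1 + 1) * (d2 + 1)) →
              ZMod (d1 * d2) → EuclideanSpace ℂ (Fin d1 × Fin d2)),
      (∀ i, Orthonormal ℂ (A i)) ∧ (∀ i, Orthonormal ℂ (C i)) ∧
      (∀ i (m : ZMod (d1 * d2)) (a : Fin d1) (b : Fin d2),
        B i m (a, b) = A i (bar1 d1 d2 t1 m) a * C i (bar2 d1 d2 t2 m) b) ∧
      (∀ i j, i ≠ j → B i ≠ B j) ∧
      (∀ i j, i ≠ j → IsWMUBPair d1 d2 (B i) (B j))) := by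
  have hf1 : Fact d1.Prime := ⟨h1⟩
  have hf2 : Fact d2.Prime := ⟨h2⟩
  have hnz1 : NeZero d1 := ⟨h1.ne_zero⟩
  have hnz2 : NeZero d2 := ⟨h2.ne_zero⟩
  constructor
  · -- upper bound
    intro ι _ A C B hA hC hB hdist hw
    have dich := fun (i j : ι) (hij : i ≠ j) =>
      wmub_dichotomy d1 d2 hne t1 t2 ht1 ht2 (A i) (A j) (C i) (C j)
        (hA i) (hA j) (hC i) (hC j) (B i) (B j) (hB i) (hB j) (hw i j hij)
    have dichA : ∀ i j, i ≠ j → RSame (A i) (A j) ∨ MUB d1 (A i) (A j) := by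
      intro i j hij
      rcases dich i j hij with ⟨hM, _⟩ | ⟨hR, _⟩ | ⟨hM, _⟩
      · exact Or.inr hM
      · exact Or.inl hR
      · exact Or.inr hM
    have dichC : ∀ i j, i ≠ j → RSame (C i) (C j) ∨ MUB d2 (C i) (C j) := by
      intro i j hij
      rcases dich i j hij with ⟨_, hR⟩ | ⟨_, hM⟩ | ⟨_, hM⟩
      · exact Or.inl hR
      · exact Or.inr hM
      · exact Or.inr hM
    have hinj : Function.Injective
        (fun i : ι => (Quotient.mk (famSetoid A hA) i, Quotient.mk (famSetoid C hC) i)) := by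
      intro i j hij2
      by_contra hne'
      have hqa : Quotient.mk (famSetoid A hA) i = Quotient.mk (famSetoid A hA) j :=
        congrArg Prod.fst hij2
      have hqc : Quotient.mk (famSetoid C hC) i = Quotient.mk (famSetoid C hC) j :=
        congrArg Prod.snd hij2
      have hra : RSame (A i) (A j) := Quotient.exact hqa
      have hrc : RSame (C i) (C j) := Quotient.exact hqc
      rcases dich i j hne' with ⟨hM, _⟩ | ⟨_, hM⟩ | ⟨hM, _⟩
      · exact RSame_not_MUB h1.one_lt hra hM
      · exact RSame_not_MUB h2.one_lt hrc hM
      · exact RSame_not_MUB h1.one_lt hra hM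
    calc Nat.card ι
        ≤ Nat.card (Quotient (famSetoid A hA) × Quotient (famSetoid C hC)) :=
          Nat.card_le_card_of_injective _ hinj
      _ = Nat.card (Quotient (famSetoid A hA)) * Nat.card (Quotient (famSetoid C hC)) :=
          Nat.card_prod _ _
      _ ≤ (d1 + 1) * (d2 + 1) :=
          Nat.mul_le_mul (famSetoid_card A hA dichA hmax1) (famSetoid_card C hC dichC hmax2)
  · -- existence
    obtain ⟨M1, hM1o, hM1m⟩ := MUB_exists d1 h1
    obtain ⟨M2, hM2o, hM2m⟩ := MUB_exists d2 h2
    let e : Fin ((d1 + 1) * (d2 + 1)) ≃ Fin (d1 + 1) × Fin (d2 + 1) := finProdFinEquiv.symm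
    set A : Fin ((d1 + 1) * (d2 + 1)) → ZMod d1 → EuclideanSpace ℂ (Fin d1) :=
      fun i => M1 (e i).1 with hAdef
    set C : Fin ((d1 + 1) * (d2 + 1)) → ZMod d2 → EuclideanSpace ℂ (Fin d2) :=
      fun i => M2 (e i).2 with hCdef
    set B : Fin ((d1 + 1) * (d2 + 1)) → ZMod (d1 * d2) → EuclideanSpace ℂ (Fin d1 × Fin d2) :=
      fun i m => WithLp.toLp 2 (fun (x : Fin d1 × Fin d2) => A i (bar1 d1 d2 t1 m) x.1 * C i (bar2 d1 d2 t2 m) x.2) with hBdef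
    have hBprod : ∀ i (m : ZMod (d1 * d2)) (a : Fin d1) (b : Fin d2),
        B i m (a, b) = A i (bar1 d1 d2 t1 m) a * C i (bar2 d1 d2 t2 m) b :=
      fun i m a b => rfl
    have hfac : ∀ i j (n m : ZMod (d1 * d2)),
        ⟪B i n, B j m⟫_ℂ = ⟪A i (bar1 d1 d2 t1 n), A j (bar1 d1 d2 t1 m)⟫_ℂ
          * ⟪C i (bar2 d1 d2 t2 n), C j (bar2 d1 d2 t2 m)⟫_ℂ :=
      fun i j n m => inner_factor d1 d2 (A i) (A j) (C i) (C j) t1 t2 (B i) (B j)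
        (hBprod i) (hBprod j) n m
    have hwmub : ∀ i j, i ≠ j → IsWMUBPair d1 d2 (B i) (B j) := by
      intro i j hij
      have hepq : (e i) ≠ (e j) := fun h => hij (e.injective h)
      rcases eq_or_ne (e i).2 (e j).2 with hq | hq
      · -- same second factor, first factors differ: case (a)
        have hp : (e i).1 ≠ (e j).1 := by
          intro hp
          exact hepq (Prod.ext hp hq)
        left
        intro n m
        constructor
        · intro hc
          rw [hfac, norm_mul]
          have hb2 : bar2 d1 d2 t2 n = bar2 d1 d2 t2 m := (bar2_eq_iff d1 d2 t2 ht2 n m).mpr hc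
          rw [hb2, hCdef]
          simp only
          rw [hq, orthonormal_iff_ite.mp (hM2o (e j).2), if_pos rfl]
          rw [hM1m (e i).1 (e j).1 hp]
          simp
        · intro hc
          rw [hfac, norm_mul]
          have hb2 : bar2 d1 d2 t2 n ≠ bar2 d1 d2 t2 m := by
            intro h
            exact hc ((bar2_eq_iff d1 d2 t2 ht2 n m).mp h)
          rw [hCdef]
          simp only
          rw [hq, orthonormal_iff_ite.mp (hM2o (e j).2), if_neg hb2]
          simp
      · rcases eq_or_ne (e i).1 (e j).1 with hp | hp
        · -- same first factor: case (b)
          right; left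
          intro n m
          constructor
          · intro hc
            rw [hfac, norm_mul]
            have hb1 : bar1 d1 d2 t1 n = bar1 d1 d2 t1 m := (bar1_eq_iff d1 d2 t1 ht1 n m).mpr hc
            rw [hb1, hAdef]
            simp only
            rw [hp, orthonormal_iff_ite.mp (hM1o (e j).1), if_pos rfl]
            rw [hM2m (e i).2 (e j).2 hq]
            simp
          · intro hc
            rw [hfac, norm_mul]
            have hb1 : bar1 d1 d2 t1 n ≠ bar1 d1 d2 t1 m := by
              intro h
              exact hc ((bar1_eq_iff d1 d2 t1 ht1 n m).mp h)
            rw [hAdef]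
            simp only
            rw [hp, orthonormal_iff_ite.mp (hM1o (e j).1), if_neg hb1]
            simp
        · -- both differ: case (c)
          right; right
          intro n m
          rw [hfac, norm_mul, hM1m (e i).1 (e j).1 hp, hM2m (e i).2 (e j).2 hq]
          rw [div_mul_div_comm, one_mul, ← Real.sqrt_mul (by positivity : (0:ℝ) ≤ (d1:ℝ))]
    have hdist : ∀ i j, i ≠ j → B i ≠ B j := by
      intro i j hij hBij
      have hself : ‖⟪B i 0, B j 0⟫_ℂ‖ = 1 := by
        rw [hBij, hfac j j 0 0, inner_self_one (hM1o (e j).1), inner_self_one (hM2o (e j).2),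
          one_mul]
        simp
      rcases hwmub i j hij with hcase | hcase | hcase
      · have := (hcase 0 0).1 rfl
        rw [hself] at this
        exact inv_sqrt_ne_one (by exact_mod_cast h1.one_lt) this.symm
      · have := (hcase 0 0).1 rfl
        rw [hself] at this
        exact inv_sqrt_ne_one (by exact_mod_cast h2.one_lt) this.symm
      · have := hcase 0 0
        rw [hself] at this
        have h1lt : (1:ℝ) < (d1:ℝ) * (d2:ℝ) := by
          have a1 : (1:ℝ) < d1 := by exact_mod_cast h1.one_lt
          have a2 : (1:ℝ) < d2 := by exact_mod_cast h2.one_lt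
          nlinarith
        exact inv_sqrt_ne_one h1lt this.symm
    exact ⟨A, C, B, fun i => hM1o _, fun i => hM2o _, hBprod, hdist, hwmub⟩
end Main
end
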